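/- arXiv:2506.23264 — 6 statements merged into one kernel-verified Lean document; each statement's English description precedes it below -/
import Mathlib

section
/- For every integer k ≥ 2, g(k) ≤ G(k), where G(k) is the maximal gap between an integer m ∈ [3, k+1] and the largest prime not exceeding m. -/
open Finset

-- auxiliary lemmas
lemma choose_zmod (p : ℕ) (hp : p.Prime) : ∀ i, i ≤ p - 1 → (((p-1).choose i : ℕ) : ZMod p) = (-1)^i := by
  haveI : Fact p.Prime := ⟨hp⟩
  intro i
  induction i with
  | zero => intro _; simp
  | succ n ih =>
    intro h
    have hp2 := hp.two_le
    have hn : n ≤ p - 1 := by omega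
    have key := Nat.choose_succ_right_eq (p-1) n
    have hsub : p - 1 - n = p - (n+1) := by omega
    rw [hsub] at key
    have hple : n + 1 ≤ p := by omega
    have := congrArg (Nat.cast : ℕ → ZMod p) key
    rw [Nat.cast_mul, Nat.cast_mul, Nat.cast_sub hple, ih hn] at this
    simp only [CharP.cast_eq_zero, zero_sub] at this
    have hne : ((n+1 : ℕ) : ZMod p) ≠ 0 := by
      intro h0
      rw [ZMod.natCast_eq_zero_iff] at h0
      have := Nat.le_of_dvd (by omega) h0
      omega
    have : (((p-1).choose (n+1) : ℕ) : ZMod p) * ((n+1 : ℕ) : ZMod p)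
        = (-1)^(n+1) * ((n+1 : ℕ) : ZMod p) := by
      rw [this]; push_cast; ring
    exact mul_right_cancel₀ hne this

lemma base_case (p : ℕ) (hp : p.Prime) (α : ℕ → Bool)
    (heq : ∑ i ∈ range ((p-1) + 1),
        (-1 : ℤ) ^ i * ((p-1).choose i) * (if α i then 1 else 0) = 0) :
    ∀ i ≤ p - 1, α i = α 0 := by
  haveI : Fact p.Prime := ⟨hp⟩
  have hp2 := hp.two_le
  have hr : (p - 1) + 1 = p := by omega
  rw [hr] at heq
  -- move to ZMod p
  have hz : ∑ i ∈ range p, ((if α i then 1 else 0 : ℕ) : ZMod p) = 0 := by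
    have := congrArg (Int.cast : ℤ → ZMod p) heq
    rw [Int.cast_sum] at this
    simp only [Int.cast_zero] at this
    rw [← this]
    apply Finset.sum_congr rfl
    intro i hi
    have hip : i ≤ p - 1 := by
      have := Finset.mem_range.mp hi; omega
    push_cast
    rw [choose_zmod p hp i hip]
    rcases Bool.eq_false_or_eq_true (α i) with hb | hb <;>
      simp [hb, ← mul_pow]
  set S := ∑ i ∈ range p, (if α i then 1 else 0 : ℕ) with hS
  have hcast : ((S : ℕ) : ZMod p) = 0 := by rw [hS, Nat.cast_sum]; exact hz
  have hdvd : p ∣ S := (ZMod.natCast_eq_zero_iff S p).mp hcast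
  have hSle : S ≤ p := by
    calc S ≤ (range p).card • 1 := Finset.sum_le_card_nsmul _ _ 1 (by
            intro x _; split <;> omega)
    _ = p := by simp
  rcases Nat.eq_zero_or_pos S with h0 | hpos
  · -- all false
    have hall : ∀ i ∈ range p, (if α i then 1 else 0 : ℕ) = 0 :=
      (Finset.sum_eq_zero_iff).mp h0
    intro i hi
    have h1 := hall i (Finset.mem_range.mpr (by omega))
    have h2 := hall 0 (Finset.mem_range.mpr (by omega))
    revert h1 h2
    rcases Bool.eq_false_or_eq_true (α i) with hb | hb <;>
    rcases Bool.eq_false_or_eq_true (α 0) with hb0 | hb0 <;>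
    simp [hb, hb0]
  · have hSp : S = p := le_antisymm hSle (Nat.le_of_dvd hpos hdvd)
    -- all true
    have hall : ∀ j ∈ range p, (if α j then 1 else 0 : ℕ) = 1 := by
      intro j hj
      by_contra hne
      have hj0 : (if α j then 1 else 0 : ℕ) = 0 := by
        rcases Bool.eq_false_or_eq_true (α j) with hb | hb <;> simp [hb] at hne ⊢
      have hbound := Finset.sum_le_card_nsmul ((range p).erase j)
          (fun i => (if α i then 1 else 0 : ℕ)) 1 (by
        intro x _
        split <;> omega)
      have hsplit := Finset.add_sum_erase (range p) (fun i => (if α i then 1 else 0 : ℕ)) hj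
      rw [Finset.card_erase_of_mem hj, smul_eq_mul, Finset.card_range] at hbound
      rw [hS] at hSp
      omega
    intro i hi
    have h1 := hall i (Finset.mem_range.mpr (by omega))
    have h2 := hall 0 (Finset.mem_range.mpr (by omega))
    revert h1 h2
    rcases Bool.eq_false_or_eq_true (α i) with hb | hb <;>
    rcases Bool.eq_false_or_eq_true (α 0) with hb0 | hb0 <;>
    simp [hb, hb0]

/-- g(k): the smallest g ≥ 0 such that for every m ∈ [2,k], the binary system
Σ_{0 ≤ i ≤ r} (-1)^i C(r,i) α_i = 0 (r = m-g, ..., m) with α ∈ {0,1}^{m+1}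
has only the all-zero and all-one solutions. -/
noncomputable def gDef (k : ℕ) : ℕ :=
  sInf {g : ℕ |
    ∀ m : ℕ, 2 ≤ m → m ≤ k →
      ∀ α : ℕ → Bool,
        (∀ r ∈ Finset.Icc (m - g) m,
          ∑ i ∈ Finset.range (r + 1),
            (-1 : ℤ) ^ i * (r.choose i) * (if α i then 1 else 0) = 0) →
        ∀ i ≤ m, α i = α 0}

/-- The largest prime not exceeding m. -/
noncomputable def largestPrimeLe (m : ℕ) : ℕ := sSup {p : ℕ | p.Prime ∧ p ≤ m}

/-- G(k): the maximal gap between an integer m ∈ [3, k+1] and the largest prime ≤ m. -/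
noncomputable def Ggap (k : ℕ) : ℕ :=
  (Finset.Icc 3 (k + 1)).sup (fun m => m - largestPrimeLe m)

theorem stmt3 : ∀ k : ℕ, 2 ≤ k → gDef k ≤ Ggap k := by
  intro k hk
  apply Nat.sInf_le
  intro m hm2 hmk α hsys
  set g := Ggap k with hg
  have hset : ({p : ℕ | p.Prime ∧ p ≤ m + 1}).Nonempty := ⟨2, Nat.prime_two, by omega⟩
  have hbdd : BddAbove {p : ℕ | p.Prime ∧ p ≤ m + 1} := ⟨m + 1, fun x hx => hx.2⟩
  have hpmem : largestPrimeLe (m+1) ∈ {p : ℕ | p.Prime ∧ p ≤ m + 1} := by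
    rw [largestPrimeLe]
    exact Nat.sSup_mem hset hbdd
  set p := largestPrimeLe (m+1) with hpdef
  obtain ⟨hpp, hple⟩ := hpmem
  have hp2 := hpp.two_le
  have hgap : m + 1 - p ≤ g := by
    have hmem : m + 1 ∈ Finset.Icc 3 (k+1) := Finset.mem_Icc.mpr ⟨by omega, by omega⟩
    have := Finset.le_sup (f := fun m => m - largestPrimeLe m) hmem
    rw [hg, Ggap]
    exact this
  have hbase : ∀ i ≤ p - 1, α i = α 0 := by
    apply base_case p hpp α
    apply hsys
    exact Finset.mem_Icc.mpr ⟨by omega, by omega⟩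
  have hmain : ∀ r, p - 1 ≤ r → r ≤ m → ∀ i ≤ r, α i = α 0 := by
    intro r hr
    induction r, hr using Nat.le_induction with
    | base => intro _; exact hbase
    | succ r hr ih =>
      intro hrm i hi
      rcases Nat.lt_or_ge i (r+1) with hlt | hge
      · exact ih (by omega) i (by omega)
      · have hieq : i = r + 1 := by omega
        subst hieq
        have heq := hsys (r+1) (Finset.mem_Icc.mpr ⟨by omega, hrm⟩)
        have hsum0 : ∑ j ∈ range ((r+1) + 1), (-1:ℤ)^j * ((r+1).choose j) = 0 :=
          Int.alternating_sum_range_choose_of_ne (by omega)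
        rw [Finset.sum_range_succ] at heq hsum0
        have hrw : ∑ j ∈ range (r+1), (-1:ℤ)^j * ((r+1).choose j) * (if α j then 1 else 0)
            = (∑ j ∈ range (r+1), (-1:ℤ)^j * ((r+1).choose j)) * (if α 0 then 1 else 0) := by
          rw [Finset.sum_mul]
          apply Finset.sum_congr rfl
          intro j hj
          have hj' : j ≤ r := by have := Finset.mem_range.mp hj; omega
          rw [ih (by omega) j hj']
        rw [hrw] at heq
        have hS : (∑ j ∈ range (r+1), (-1:ℤ)^j * ((r+1).choose j)) = -(-1:ℤ)^(r+1) := by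
          rw [Nat.choose_self] at hsum0
          push_cast at hsum0
          linarith
        rw [hS, Nat.choose_self] at heq
        rcases Bool.eq_false_or_eq_true (α (r+1)) with hb | hb <;>
        rcases Bool.eq_false_or_eq_true (α 0) with hb0 | hb0 <;>
        simp [hb, hb0] at heq ⊢
  intro i hi
  exact hmain m (by omega) le_rfl i hi
end

section
/- Let n, k ∈ ℕ with n ≥ 2k. A function f : C([n],k) → ℝ satisfies W^k(f) = 0 if and only if there exists a function h : C([n], k−1) → ℝ such that for all R ∈ C([n],k), f(R) = Σ_{S ⊂ R, |S| = k−1} h(S). -/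
open Finset

/-- Inner signed average over k-subsets R crossing each pair {a i, b i}:
E_R [ (-1)^{|R ∩ {b_1,...,b_r}|} f(R) ]. -/
noncomputable def signedAvg {V : Type*} [Fintype V] [DecidableEq V] (k : ℕ) {r : ℕ}
    (f : Finset V → ℝ) (a b : Fin r → V) : ℝ :=
  (∑ R ∈ (Finset.univ.powersetCard k).filter
      (fun R => ∀ i, (R ∩ {a i, b i}).card = 1),
      (-1 : ℝ) ^ (R ∩ Finset.image b Finset.univ).card * f R) /
  (((Finset.univ.powersetCard k).filter
      (fun R => ∀ i, (R ∩ {a i, b i}).card = 1)).card)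

/-- The level-r weight W^r(f) of a function on k-subsets: the square root of the
average, over all sequences (a_1,b_1,...,a_r,b_r) of 2r distinct vertices, of the
square of the inner signed average. -/
noncomputable def Wpow {V : Type*} [Fintype V] [DecidableEq V] (k r : ℕ)
    (f : Finset V → ℝ) : ℝ :=
  Real.sqrt
    ((∑ p ∈ (Finset.univ : Finset ((Fin r → V) × (Fin r → V))).filter
        (fun p => Function.Injective (Sum.elim p.1 p.2)),
        (signedAvg k f p.1 p.2) ^ 2) /
      (((Finset.univ : Finset ((Fin r → V) × (Fin r → V))).filter
        (fun p => Function.Injective (Sum.elim p.1 p.2))).card))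

namespace Stmt9

variable {n k : ℕ}

/-- the choice function: pick `b i` when `i ∈ I`, else `a i`. -/
def cf (I : Finset (Fin k)) (a b : Fin k → Fin n) : Fin k → Fin n :=
  fun i => if i ∈ I then b i else a i

/-- the transversal set determined by `I`. -/
def tset (I : Finset (Fin k)) (a b : Fin k → Fin n) : Finset (Fin n) :=
  Finset.image (cf I a b) Finset.univ

/-- All signed difference sums of order `k` vanish. -/
def Diff0 (k : ℕ) (f : Finset (Fin n) → ℝ) : Prop :=
  ∀ a b : Fin k → Fin n, Function.Injective (Sum.elim a b) →
    ∑ I : Finset (Fin k), (-1 : ℝ) ^ I.card * f (tset I a b) = 0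

section pairs

variable {a b : Fin k → Fin n} (hab : Function.Injective (Sum.elim a b))

lemma inj_a (hab : Function.Injective (Sum.elim a b)) : Function.Injective a :=
  fun i j h => by
    have := hab (a₁ := Sum.inl i) (a₂ := Sum.inl j) (by simpa using h); simpa using this

lemma inj_b (hab : Function.Injective (Sum.elim a b)) : Function.Injective b :=
  fun i j h => by
    have := hab (a₁ := Sum.inr i) (a₂ := Sum.inr j) (by simpa using h); simpa using this

lemma ne_ab (hab : Function.Injective (Sum.elim a b)) (i j : Fin k) : a i ≠ b j := by
  intro h
  have := hab (a₁ := Sum.inl i) (a₂ := Sum.inr j) (by simpa using h)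
  simp at this

lemma cf_injective (hab : Function.Injective (Sum.elim a b)) (I : Finset (Fin k)) :
    Function.Injective (cf I a b) := by
  intro i j h
  unfold cf at h
  by_cases hi : i ∈ I <;> by_cases hj : j ∈ I <;> simp [hi, hj] at h
  · exact inj_b hab h
  · exact absurd h.symm (ne_ab hab j i)
  · exact absurd h (ne_ab hab i j)
  · exact inj_a hab h

lemma card_tset (hab : Function.Injective (Sum.elim a b)) (I : Finset (Fin k)) :
    (tset I a b).card = k := by
  rw [tset, Finset.card_image_of_injective _ (cf_injective hab I)]
  simp

lemma b_mem_tset (hab : Function.Injective (Sum.elim a b)) {I : Finset (Fin k)} {i : Fin k} :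
    b i ∈ tset I a b ↔ i ∈ I := by
  constructor
  · intro h
    obtain ⟨j, -, hj⟩ := Finset.mem_image.mp h
    by_cases hjI : j ∈ I
    · simp only [cf, if_pos hjI] at hj
      rwa [← inj_b hab hj]
    · simp only [cf, if_neg hjI] at hj
      exact absurd hj (ne_ab hab j i)
  · intro h
    exact Finset.mem_image.mpr ⟨i, by simp, by simp [cf, h]⟩

lemma a_mem_tset (hab : Function.Injective (Sum.elim a b)) {I : Finset (Fin k)} {i : Fin k} :
    a i ∈ tset I a b ↔ i ∉ I := by
  constructor
  · intro h hiI
    obtain ⟨j, -, hj⟩ := Finset.mem_image.mp h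
    by_cases hjI : j ∈ I
    · simp only [cf, if_pos hjI] at hj
      exact ne_ab hab i j hj.symm
    · simp only [cf, if_neg hjI] at hj
      have := inj_a hab hj
      subst this; exact hjI hiI
  · intro h
    exact Finset.mem_image.mpr ⟨i, by simp, by simp [cf, h]⟩

lemma tset_injective (hab : Function.Injective (Sum.elim a b)) :
    Function.Injective (fun I => tset I a b) := by
  intro I J h
  simp only at h
  ext i
  rw [← b_mem_tset hab (I := I), ← b_mem_tset hab (I := J), h]

lemma mem_tset_elts (hab : Function.Injective (Sum.elim a b)) {I : Finset (Fin k)} {x : Fin n}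
    (hx : x ∈ tset I a b) : ∃ i, cf I a b i = x := by
  obtain ⟨i, -, hi⟩ := Finset.mem_image.mp hx; exact ⟨i, hi⟩

end pairs
section stepA

variable {a b : Fin k → Fin n}

lemma tset_inter_pair (hab : Function.Injective (Sum.elim a b)) (I : Finset (Fin k)) (i : Fin k) :
    tset I a b ∩ {a i, b i} = {cf I a b i} := by
  ext x
  simp only [Finset.mem_inter, Finset.mem_insert, Finset.mem_singleton]
  constructor
  · rintro ⟨hx, hx2 | hx2⟩
    · subst hx2
      have := (a_mem_tset hab).mp hx
      simp [cf, this]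
    · subst hx2
      have := (b_mem_tset hab).mp hx
      simp [cf, this]
  · rintro rfl
    refine ⟨Finset.mem_image.mpr ⟨i, by simp, rfl⟩, ?_⟩
    by_cases hi : i ∈ I <;> simp [cf, hi]

lemma filter_pairs_eq (hab : Function.Injective (Sum.elim a b)) :
    (Finset.univ.powersetCard k).filter
      (fun R : Finset (Fin n) => ∀ i, (R ∩ {a i, b i}).card = 1) =
    Finset.univ.image (fun I => tset I a b) := by
  ext R
  simp only [Finset.mem_filter, Finset.mem_powersetCard, Finset.mem_image, Finset.mem_univ,
    true_and]
  constructor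
  · rintro ⟨⟨-, hcard⟩, hR⟩
    refine ⟨Finset.univ.filter (fun i => b i ∈ R), ?_⟩
    have hsub : tset (Finset.univ.filter (fun i => b i ∈ R)) a b ⊆ R := by
      intro x hx
      obtain ⟨i, hi⟩ := mem_tset_elts hab hx
      by_cases hbi : b i ∈ R
      · rw [← hi]; simpa [cf, hbi] using hbi
      · have h1 := hR i
        have h2 : a i ∈ R := by
          have hcard1 : (R ∩ {a i, b i}).card = 1 := h1
          obtain ⟨y, hy⟩ := Finset.card_eq_one.mp hcard1
          have hya : y ∈ R ∩ {a i, b i} := hy ▸ Finset.mem_singleton_self y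
          rw [Finset.mem_inter, Finset.mem_insert, Finset.mem_singleton] at hya
          rcases hya.2 with rfl | rfl
          · exact hya.1
          · exact absurd hya.1 hbi
        rw [← hi]; simpa [cf, hbi] using h2
    have : (tset (Finset.univ.filter (fun i => b i ∈ R)) a b).card = R.card := by
      rw [card_tset hab, hcard]
    exact Finset.eq_of_subset_of_card_le hsub (le_of_eq this.symm)
  · rintro ⟨I, rfl⟩
    refine ⟨⟨Finset.subset_univ _, card_tset hab I⟩, fun i => ?_⟩
    rw [tset_inter_pair hab]
    simp

lemma tset_inter_image (hab : Function.Injective (Sum.elim a b)) (I : Finset (Fin k)) :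
    tset I a b ∩ Finset.image b Finset.univ = Finset.image b I := by
  ext x
  simp only [Finset.mem_inter, Finset.mem_image, Finset.mem_univ, true_and]
  constructor
  · rintro ⟨hx, j, rfl⟩
    exact ⟨j, (b_mem_tset hab).mp hx, rfl⟩
  · rintro ⟨j, hj, rfl⟩
    exact ⟨(b_mem_tset hab).mpr hj, j, rfl⟩

lemma signedAvg_eq (hab : Function.Injective (Sum.elim a b)) (f : Finset (Fin n) → ℝ) :
    signedAvg k f a b =
      (∑ I : Finset (Fin k), (-1 : ℝ) ^ I.card * f (tset I a b)) / 2 ^ k := by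
  unfold signedAvg
  rw [filter_pairs_eq hab]
  rw [Finset.sum_image (fun I _ J _ h => tset_injective hab h)]
  rw [Finset.card_image_of_injective _ (tset_injective hab)]
  congr 1
  · apply Finset.sum_congr rfl
    intro I _
    rw [tset_inter_image hab, Finset.card_image_of_injective _ (inj_b hab)]
  · rw [Finset.card_univ, Fintype.card_finset, Fintype.card_fin]
    push_cast
    ring

lemma exists_pair (hn : 2 * k ≤ n) :
    ∃ a b : Fin k → Fin n, Function.Injective (Sum.elim a b) := by
  refine ⟨fun i => ⟨i, by omega⟩, fun i => ⟨k + i, by omega⟩, ?_⟩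
  rintro (i | i) (j | j) h <;> simp only [Sum.elim_inl, Sum.elim_inr, Fin.mk.injEq] at h <;>
    first
      | (congr 1; exact Fin.ext (by omega))
      | (exfalso; omega)

lemma wpow_zero_iff (hn : 2 * k ≤ n) (f : Finset (Fin n) → ℝ) :
    Wpow k k f = 0 ↔
      ∀ a b : Fin k → Fin n, Function.Injective (Sum.elim a b) → signedAvg k f a b = 0 := by
  unfold Wpow
  set F := (Finset.univ : Finset ((Fin k → Fin n) × (Fin k → Fin n))).filter
    (fun p => Function.Injective (Sum.elim p.1 p.2)) with hF
  have hFne : F.Nonempty := by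
    obtain ⟨a, b, hab⟩ := exists_pair hn
    exact ⟨(a, b), by rw [hF, Finset.mem_filter]; exact ⟨Finset.mem_univ _, hab⟩⟩
  have hcard : (0 : ℝ) < F.card := by
    exact_mod_cast Finset.card_pos.mpr hFne
  have hnonneg : (0 : ℝ) ≤ ∑ p ∈ F, (signedAvg k f p.1 p.2) ^ 2 :=
    Finset.sum_nonneg fun p _ => sq_nonneg _
  constructor
  · intro h a b hab
    have h0 : (∑ p ∈ F, (signedAvg k f p.1 p.2) ^ 2) / F.card ≤ 0 :=
      Real.sqrt_eq_zero'.mp h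
    have h1 : (∑ p ∈ F, (signedAvg k f p.1 p.2) ^ 2) = 0 := by
      have h2 : (∑ p ∈ F, (signedAvg k f p.1 p.2) ^ 2) ≤ 0 := by
        have := mul_le_mul_of_nonneg_right h0 (le_of_lt hcard)
        rw [div_mul_cancel₀] at this
        · simpa using this
        · exact ne_of_gt hcard
      linarith
    have h3 := (Finset.sum_eq_zero_iff_of_nonneg (fun p _ => sq_nonneg _)).mp h1
      (a, b) (by rw [hF, Finset.mem_filter]; exact ⟨Finset.mem_univ _, hab⟩)
    exact pow_eq_zero_iff two_ne_zero |>.mp h3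
  · intro h
    have h1 : (∑ p ∈ F, (signedAvg k f p.1 p.2) ^ 2) = 0 := by
      apply Finset.sum_eq_zero
      intro p hp
      rw [hF, Finset.mem_filter] at hp
      rw [h p.1 p.2 hp.2]
      ring
    rw [h1, zero_div, Real.sqrt_zero]

end stepA
section stepB

lemma powersetCard_pred_eq (R : Finset (Fin n)) (hk : 1 ≤ k) (hR : R.card = k) :
    R.powersetCard (k - 1) = R.image (fun x => R.erase x) := by
  ext S
  simp only [Finset.mem_powersetCard, Finset.mem_image]
  constructor
  · rintro ⟨hsub, hcard⟩
    have hd : (R \ S).card = 1 := by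
      rw [Finset.card_sdiff_of_subset hsub, hR, hcard]; omega
    obtain ⟨x, hx⟩ := Finset.card_eq_one.mp hd
    have hxR : x ∈ R := by
      have : x ∈ R \ S := hx ▸ Finset.mem_singleton_self x
      exact (Finset.mem_sdiff.mp this).1
    refine ⟨x, hxR, ?_⟩
    have h1 : R \ (R \ S) = S := Finset.sdiff_sdiff_eq_self hsub
    rw [hx] at h1
    rw [← h1, Finset.sdiff_singleton_eq_erase]
  · rintro ⟨x, hx, rfl⟩
    exact ⟨Finset.erase_subset _ _, by rw [Finset.card_erase_of_mem hx, hR]⟩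

lemma sum_subsets_pred (R : Finset (Fin n)) (hk : 1 ≤ k) (hR : R.card = k)
    (g : Finset (Fin n) → ℝ) :
    ∑ S ∈ R.powersetCard (k - 1), g S = ∑ x ∈ R, g (R.erase x) := by
  rw [powersetCard_pred_eq R hk hR]
  rw [Finset.sum_image]
  intro x hx y hy h
  have : x ∉ R.erase x := Finset.notMem_erase x R
  rw [show R.erase x = R.erase y from h] at this
  by_contra hne
  exact this (Finset.mem_erase.mpr ⟨hne, hx⟩)

lemma diff0_congr {f g : Finset (Fin n) → ℝ}
    (hfg : ∀ R : Finset (Fin n), R.card = k → f R = g R) :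
    Diff0 k f ↔ Diff0 k g := by
  have key : ∀ a b : Fin k → Fin n, Function.Injective (Sum.elim a b) →
      (∑ I : Finset (Fin k), (-1 : ℝ) ^ I.card * f (tset I a b)) =
      ∑ I : Finset (Fin k), (-1 : ℝ) ^ I.card * g (tset I a b) := by
    intro a b hab
    apply Finset.sum_congr rfl
    intro I _
    rw [hfg _ (card_tset hab I)]
  constructor <;> intro h a b hab
  · rw [← key a b hab]; exact h a b hab
  · rw [key a b hab]; exact h a b hab

lemma diff0_sub {f g : Finset (Fin n) → ℝ} (hf : Diff0 k f) (hg : Diff0 k g) :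
    Diff0 k (fun R => f R - g R) := by
  intro a b hab
  have h1 := hf a b hab
  have h2 := hg a b hab
  simp only [mul_sub]
  rw [Finset.sum_sub_distrib, h1, h2, sub_zero]

/-- the key cancellation: any function of the form `R ↦ ∑_{S ⊂ R, |S|=k-1} g S`
has vanishing difference sums. -/
lemma diff0_U (hk : 1 ≤ k) (g : Finset (Fin n) → ℝ) :
    Diff0 k (fun R => ∑ S ∈ R.powersetCard (k - 1), g S) := by
  intro a b hab
  have step1 : ∀ I : Finset (Fin k),
      (∑ S ∈ (tset I a b).powersetCard (k - 1), g S) =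
      ∑ i : Fin k, g ((tset I a b).erase (cf I a b i)) := by
    intro I
    rw [sum_subsets_pred _ hk (card_tset hab I)]
    rw [tset, Finset.sum_image (fun i _ j _ h => cf_injective hab I h)]
  simp only [step1, Finset.mul_sum]
  rw [Finset.sum_comm]
  apply Finset.sum_eq_zero
  intro i _
  -- involution I ↦ I Δ {i}
  have key : ∀ I : Finset (Fin k),
      (tset I a b).erase (cf I a b i) = Finset.image (cf I a b) (Finset.univ.erase i) := by
    intro I
    rw [tset, ← Finset.image_erase (cf_injective hab I)]
  have key2 : ∀ I : Finset (Fin k), ∀ (hi : i ∉ I),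
      Finset.image (cf I a b) (Finset.univ.erase i) =
      Finset.image (cf (insert i I) a b) (Finset.univ.erase i) := by
    intro I hi
    apply Finset.image_congr
    intro j hj
    rw [Finset.coe_erase, Set.mem_diff] at hj
    have hji : j ≠ i := by simpa using hj.2
    simp only [cf, Finset.mem_insert]
    by_cases hjI : j ∈ I <;> simp [hjI, hji]
  apply Finset.sum_ninvolution (g := fun I => if i ∈ I then I.erase i else insert i I)
  · intro I
    by_cases hi : i ∈ I
    · simp only [if_pos hi]
      rw [key, key, key2 (I.erase i) (Finset.notMem_erase i I), Finset.insert_erase hi,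
        Finset.card_erase_of_mem hi]
      obtain ⟨m, hm⟩ : ∃ m, I.card = m + 1 :=
        ⟨I.card - 1, by have := Finset.card_pos.mpr ⟨i, hi⟩; omega⟩
      rw [hm]
      simp only [Nat.add_sub_cancel, pow_succ]
      ring
    · simp only [if_neg hi]
      rw [key, key, key2 I hi]
      rw [Finset.card_insert_of_notMem hi, pow_succ]
      ring
  · intro I _
    by_cases hi : i ∈ I
    · simp only [if_pos hi]
      intro h
      exact Finset.notMem_erase i I (by rw [h]; exact hi)
    · simp only [if_neg hi]
      intro h
      exact hi (h ▸ Finset.mem_insert_self i I)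
  · intro I; exact Finset.mem_univ _
  · intro I
    by_cases hi : i ∈ I
    · rw [if_pos hi, if_neg (Finset.notMem_erase i I), Finset.insert_erase hi]
    · rw [if_neg hi, if_pos (Finset.mem_insert_self i I), Finset.erase_insert hi]

/-- Main characterization: `Wpow k k f = 0` iff all difference sums vanish. -/
lemma wpow_zero_iff_diff0 (hn : 2 * k ≤ n) (f : Finset (Fin n) → ℝ) :
    Wpow k k f = 0 ↔ Diff0 k f := by
  rw [wpow_zero_iff hn f]
  constructor <;> intro h a b hab
  · have := h a b hab
    rw [signedAvg_eq hab f] at this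
    have h2 : (2 : ℝ) ^ k ≠ 0 := by positivity
    field_simp at this
    simpa using this
  · rw [signedAvg_eq hab f, h a b hab, zero_div]

end stepB
section stepC

/-- sums of `q` over `k`-sets meeting `R` in exactly `i` points -/
noncomputable def Nsum {n : ℕ} (k : ℕ) (q : Finset (Fin n) → ℝ) (R : Finset (Fin n)) (i : ℕ) : ℝ :=
  ∑ T ∈ (Finset.univ.powersetCard k).filter (fun T => (T ∩ R).card = i), q T

variable {q : Finset (Fin n) → ℝ} {R : Finset (Fin n)}

lemma count_subsets (hk : 1 ≤ k) {T : Finset (Fin n)} (hT : T.card = k) (i : ℕ) :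
    ((((Finset.univ.powersetCard (k - 1)).filter
        (fun S => (S ∩ R).card = i)).filter (fun S => S ⊆ T)).card : ℝ) =
      (if (T ∩ R).card = i then (k : ℝ) - i else 0) +
      (if (T ∩ R).card = i + 1 then (i : ℝ) + 1 else 0) := by
  classical
  set t := (T ∩ R).card with ht
  have hstep : ((Finset.univ.powersetCard (k - 1)).filter
        (fun S => (S ∩ R).card = i)).filter (fun S => S ⊆ T) =
      (T.powersetCard (k - 1)).filter (fun S => (S ∩ R).card = i) := by
    ext S
    simp only [Finset.mem_filter, Finset.mem_powersetCard]
    constructor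
    · rintro ⟨⟨⟨-, h1⟩, h2⟩, h3⟩; exact ⟨⟨h3, h1⟩, h2⟩
    · rintro ⟨⟨h1, h2⟩, h3⟩; exact ⟨⟨⟨Finset.subset_univ _, h2⟩, h3⟩, h1⟩
  rw [hstep, powersetCard_pred_eq T hk hT, Finset.filter_image]
  have herase_inj : Set.InjOn (fun x => T.erase x) T := by
    intro x hx y hy h
    simp only at h
    by_contra hne
    have : x ∉ T.erase x := Finset.notMem_erase x T
    exact this (h ▸ Finset.mem_erase.mpr ⟨hne, hx⟩)
  rw [Finset.card_image_of_injOn (herase_inj.mono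
    (Finset.coe_subset.mpr (Finset.filter_subset _ _)))]
  have hcond : ∀ x ∈ T, ((T.erase x ∩ R).card = i ↔
      (x ∈ R ∧ t = i + 1) ∨ (x ∉ R ∧ t = i)) := by
    intro x hx
    have hxe : T.erase x ∩ R = (T ∩ R).erase x := by
      ext y
      simp only [Finset.mem_inter, Finset.mem_erase]
      tauto
    rw [hxe]
    by_cases hxR : x ∈ R
    · have hxTR : x ∈ T ∩ R := Finset.mem_inter.mpr ⟨hx, hxR⟩
      rw [Finset.card_erase_of_mem hxTR]
      have htpos : 1 ≤ t := Finset.card_pos.mpr ⟨x, hxTR⟩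
      constructor
      · intro h; left; exact ⟨hxR, by omega⟩
      · rintro (⟨-, h⟩ | ⟨h, -⟩)
        · omega
        · exact absurd hxR h
    · have hxTR : x ∉ T ∩ R := fun h => hxR (Finset.mem_inter.mp h).2
      rw [Finset.erase_eq_of_notMem hxTR]
      constructor
      · intro h; right; exact ⟨hxR, h⟩
      · rintro (⟨h, -⟩ | ⟨-, h⟩)
        · exact absurd h hxR
        · exact h
  rw [Finset.filter_congr (fun x hx => hcond x hx)]
  by_cases h1 : t = i
  · have h2 : ¬ t = i + 1 := by omega
    have : T.filter (fun x => (x ∈ R ∧ t = i + 1) ∨ (x ∉ R ∧ t = i)) = T \ R := by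
      ext x
      simp only [Finset.mem_filter, Finset.mem_sdiff]
      constructor
      · rintro ⟨hx, (⟨-, h⟩ | ⟨h, -⟩)⟩
        · omega
        · exact ⟨hx, h⟩
      · rintro ⟨hx, hxR⟩; exact ⟨hx, Or.inr ⟨hxR, h1⟩⟩
    rw [this, if_pos h1, if_neg h2, add_zero]
    have := Finset.card_inter_add_card_sdiff T R
    have hti : t ≤ k := by rw [← hT]; exact Finset.card_le_card (Finset.inter_subset_left)
    have : (T \ R).card = k - t := by omega
    rw [this, h1] at *
    have hik : i ≤ k := by omega
    push_cast [Nat.cast_sub hik]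
    ring
  · by_cases h2 : t = i + 1
    · have : T.filter (fun x => (x ∈ R ∧ t = i + 1) ∨ (x ∉ R ∧ t = i)) = T ∩ R := by
        ext x
        simp only [Finset.mem_filter, Finset.mem_inter]
        constructor
        · rintro ⟨hx, (⟨h, -⟩ | ⟨-, h⟩)⟩
          · exact ⟨hx, h⟩
          · omega
        · rintro ⟨hx, hxR⟩; exact ⟨hx, Or.inl ⟨hxR, h2⟩⟩
      rw [this, if_neg h1, if_pos h2, zero_add, ← ht, h2]
      push_cast
      ring
    · have : T.filter (fun x => (x ∈ R ∧ t = i + 1) ∨ (x ∉ R ∧ t = i)) = ∅ := by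
        apply Finset.filter_false_of_mem
        intro x hx
        rintro (⟨-, h⟩ | ⟨-, h⟩) <;> omega
      rw [this, if_neg h1, if_neg h2]
      simp

lemma harmonic_recurrence (hk : 1 ≤ k)
    (hharm : ∀ S : Finset (Fin n), S.card = k - 1 →
      ∑ T ∈ (Finset.univ.powersetCard k).filter (fun T => S ⊆ T), q T = 0)
    (i : ℕ) (hi : i < k) :
    ((k : ℝ) - i) * Nsum k q R i + ((i : ℝ) + 1) * Nsum k q R (i + 1) = 0 := by
  classical
  set X := (Finset.univ.powersetCard (k - 1)).filter
    (fun S : Finset (Fin n) => (S ∩ R).card = i) with hX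
  have h1 : (0 : ℝ) = ∑ S ∈ X, ∑ T ∈ Finset.univ.powersetCard k,
      if S ⊆ T then q T else 0 := by
    symm
    apply Finset.sum_eq_zero
    intro S hS
    rw [hX, Finset.mem_filter, Finset.mem_powersetCard] at hS
    rw [← Finset.sum_filter]
    exact hharm S hS.1.2
  rw [Finset.sum_comm] at h1
  have h2 : ∀ T ∈ Finset.univ.powersetCard k,
      (∑ S ∈ X, if S ⊆ T then q T else 0) =
      ((if (T ∩ R).card = i then (k : ℝ) - i else 0) +
       (if (T ∩ R).card = i + 1 then (i : ℝ) + 1 else 0)) * q T := by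
    intro T hT
    rw [← Finset.sum_filter, Finset.sum_const, nsmul_eq_mul]
    rw [Finset.mem_powersetCard] at hT
    rw [count_subsets hk hT.2 i]
  rw [Finset.sum_congr rfl h2] at h1
  simp only [add_mul, Finset.sum_add_distrib, ite_mul, zero_mul] at h1
  rw [← Finset.sum_filter, ← Finset.sum_filter] at h1
  rw [eq_comm] at h1
  unfold Nsum
  rw [Finset.mul_sum, Finset.mul_sum, ← h1]
  congr 1
  apply Finset.sum_congr rfl
  intro T _
  ring
lemma Nsum_top (hR : R.card = k) : Nsum k q R k = q R := by
  unfold Nsum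
  have : (Finset.univ.powersetCard k).filter
      (fun T : Finset (Fin n) => (T ∩ R).card = k) = {R} := by
    ext T
    simp only [Finset.mem_filter, Finset.mem_powersetCard, Finset.mem_singleton]
    constructor
    · rintro ⟨⟨-, hT⟩, hTR⟩
      have hsub : T ∩ R ⊆ T := Finset.inter_subset_left
      have h1 : T ∩ R = T := Finset.eq_of_subset_of_card_le hsub (by omega)
      have h2 : T ⊆ R := by rw [← h1]; exact Finset.inter_subset_right
      exact Finset.eq_of_subset_of_card_le h2 (by omega)
    · rintro rfl
      exact ⟨⟨Finset.subset_univ _, hR⟩, by rw [Finset.inter_self, hR]⟩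
  rw [this, Finset.sum_singleton]

lemma Nsum_closed (hk : 1 ≤ k)
    (hharm : ∀ S : Finset (Fin n), S.card = k - 1 →
      ∑ T ∈ (Finset.univ.powersetCard k).filter (fun T => S ⊆ T), q T = 0)
    (hR : R.card = k) :
    ∀ j, j ≤ k → Nsum k q R (k - j) = (-1 : ℝ) ^ j * (k.choose j) * q R := by
  intro j
  induction j with
  | zero => intro _; simpa using Nsum_top hR
  | succ m ih =>
    intro hm
    have hmk : m ≤ k := by omega
    have ih' := ih hmk
    have hrec := harmonic_recurrence (q := q) (R := R) hk hharm (k - (m + 1)) (by omega)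
    have hidx : k - (m + 1) + 1 = k - m := by omega
    rw [hidx] at hrec
    have hcast1 : ((k : ℝ) - ((k - (m + 1) : ℕ) : ℝ)) = (m : ℝ) + 1 := by
      push_cast [Nat.cast_sub hm]
      ring
    have hcast2 : (((k - (m + 1) : ℕ) : ℝ)) + 1 = (k : ℝ) - m := by
      push_cast [Nat.cast_sub hm]
      ring
    rw [hcast1, hcast2] at hrec
    have hchoose : ((k.choose (m + 1) : ℝ)) * ((m : ℝ) + 1) =
        (k.choose m : ℝ) * ((k : ℝ) - m) := by
      have := Nat.choose_succ_right_eq k m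
      have h2 : ((k.choose (m + 1) * (m + 1) : ℕ) : ℝ) = ((k.choose m * (k - m) : ℕ) : ℝ) := by
        exact_mod_cast congrArg (Nat.cast : ℕ → ℝ) this
      push_cast [Nat.cast_sub hmk] at h2
      linarith
    have hne : ((m : ℝ) + 1) ≠ 0 := by positivity
    apply mul_left_cancel₀ hne
    linear_combination hrec - ((k : ℝ) - (m : ℝ)) * ih' + ((-1 : ℝ) ^ m * q R) * hchoose
lemma tset_union (I : Finset (Fin k)) (a b : Fin k → Fin n) :
    tset I a b = Finset.image a Iᶜ ∪ Finset.image b I := by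
  ext x
  simp only [tset, Finset.mem_image, Finset.mem_union, Finset.mem_univ, true_and,
    Finset.mem_compl]
  constructor
  · rintro ⟨i, rfl⟩
    by_cases hi : i ∈ I
    · right; exact ⟨i, hi, by simp [cf, hi]⟩
    · left; exact ⟨i, hi, by simp [cf, hi]⟩
  · rintro (⟨i, hi, rfl⟩ | ⟨i, hi, rfl⟩)
    · exact ⟨i, by simp [cf, hi]⟩
    · exact ⟨i, by simp [cf, hi]⟩

lemma fiber_count {a : Fin k → Fin n} (ha : Function.Injective a)
    (haR : Finset.image a Finset.univ = R) (hR : R.card = k)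
    (I : Finset (Fin k)) {C : Finset (Fin n)}
    (hC : C ∈ (Finset.univ \ R).powersetCard I.card) :
    (((Finset.univ.filter (fun b : Fin k → Fin n =>
        Function.Injective (Sum.elim a b))).filter
      (fun b => Finset.image b I = C)).card : ℕ) =
    (I.card).factorial * (n - k - I.card).descFactorial (k - I.card) := by
  classical
  rw [Finset.mem_powersetCard] at hC
  obtain ⟨hCsub, hCcard⟩ := hC
  set D := (Finset.univ \ R) \ C with hD
  have hmemR : ∀ x : Fin n, x ∈ R ↔ ∃ i, a i = x := by
    intro x
    rw [← haR]
    simp [Finset.mem_image]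
  -- step 1 : identify the fiber
  have step1 : (Finset.univ.filter (fun b : Fin k → Fin n =>
        Function.Injective (Sum.elim a b))).filter (fun b => Finset.image b I = C) =
      Finset.univ.filter (fun b : Fin k → Fin n =>
        Function.Injective b ∧ ∀ i, b i ∈ (if i ∈ I then C else D)) := by
    ext b
    simp only [Finset.mem_filter, Finset.mem_univ, true_and]
    constructor
    · rintro ⟨hab, hbI⟩
      have hbnR : ∀ i, b i ∉ R := by
        intro i hbR
        obtain ⟨i', hi'⟩ := (hmemR (b i)).mp hbR
        exact ne_ab hab i' i hi'
      refine ⟨inj_b hab, fun i => ?_⟩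
      by_cases hi : i ∈ I
      · rw [if_pos hi, ← hbI]
        exact Finset.mem_image.mpr ⟨i, hi, rfl⟩
      · rw [if_neg hi, hD]
        refine Finset.mem_sdiff.mpr ⟨Finset.mem_sdiff.mpr ⟨Finset.mem_univ _, hbnR i⟩, ?_⟩
        intro hbC
        rw [← hbI] at hbC
        obtain ⟨i', hi', hbi'⟩ := Finset.mem_image.mp hbC
        exact hi ((inj_b hab hbi') ▸ hi')
    · rintro ⟨hb, hmem⟩
      have hbnR : ∀ i, b i ∉ R := by
        intro i
        have := hmem i
        by_cases hi : i ∈ I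
        · rw [if_pos hi] at this
          have := hCsub this
          exact (Finset.mem_sdiff.mp this).2
        · rw [if_neg hi, hD] at this
          exact (Finset.mem_sdiff.mp (Finset.mem_sdiff.mp this).1).2
      constructor
      · refine Function.Injective.sumElim ha hb ?_
        intro i j hij
        apply hbnR j
        rw [← hij, hmemR]
        exact ⟨i, rfl⟩
      · have hsub : Finset.image b I ⊆ C := by
          intro x hx
          obtain ⟨i, hi, rfl⟩ := Finset.mem_image.mp hx
          have := hmem i
          rwa [if_pos hi] at this
        apply Finset.eq_of_subset_of_card_le hsub
        rw [Finset.card_image_of_injective _ hb, hCcard]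
  rw [step1, ← Fintype.card_subtype]
  -- step 2 : the equivalence with a product of embedding types
  have hDC : ∀ x ∈ C, x ∉ D := by
    intro x hx hxD
    exact (Finset.mem_sdiff.mp hxD).2 hx
  let e : {b : Fin k → Fin n // Function.Injective b ∧
      ∀ i, b i ∈ (if i ∈ I then C else D)} ≃ (({i // i ∈ I} ↪ {x // x ∈ C}) ×
        ({i // i ∉ I} ↪ {x // x ∈ D})) :=
    { toFun := fun b =>
        ⟨⟨fun i => ⟨b.1 i.1, by have := b.2.2 i.1; rwa [if_pos i.2] at this⟩,
          fun i j hij => Subtype.ext (b.2.1 (congrArg Subtype.val hij))⟩,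
         ⟨fun i => ⟨b.1 i.1, by have := b.2.2 i.1; rwa [if_neg i.2] at this⟩,
          fun i j hij => Subtype.ext (b.2.1 (congrArg Subtype.val hij))⟩⟩
      invFun := fun uv =>
        ⟨fun i => if h : i ∈ I then (uv.1 ⟨i, h⟩ : Fin n) else (uv.2 ⟨i, h⟩ : Fin n), by
          constructor
          · intro i j hij
            dsimp only at hij
            by_cases hi : i ∈ I <;> by_cases hj : j ∈ I
            · rw [dif_pos hi, dif_pos hj] at hij
              exact congrArg Subtype.val (uv.1.injective (Subtype.ext hij))
            · exfalso
              rw [dif_pos hi, dif_neg hj] at hij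
              have h1 : ((uv.1 ⟨i, hi⟩ : {x // x ∈ C}) : Fin n) ∈ C := (uv.1 ⟨i, hi⟩).2
              rw [hij] at h1
              exact hDC _ h1 (uv.2 ⟨j, hj⟩).2
            · exfalso
              rw [dif_neg hi, dif_pos hj] at hij
              have h1 : ((uv.1 ⟨j, hj⟩ : {x // x ∈ C}) : Fin n) ∈ C := (uv.1 ⟨j, hj⟩).2
              rw [← hij] at h1
              exact hDC _ h1 (uv.2 ⟨i, hi⟩).2
            · rw [dif_neg hi, dif_neg hj] at hij
              exact congrArg Subtype.val (uv.2.injective (Subtype.ext hij))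
          · intro i
            dsimp only
            by_cases hi : i ∈ I
            · rw [dif_pos hi, if_pos hi]; exact (uv.1 ⟨i, hi⟩).2
            · rw [dif_neg hi, if_neg hi]; exact (uv.2 ⟨i, hi⟩).2⟩
      left_inv := fun b => Subtype.ext (funext fun i => by
        by_cases hi : i ∈ I
        · simp [hi]; rfl
        · simp [hi]; rfl)
      right_inv := fun uv => by
        ext i
        · simp [i.2]
        · simp [i.2] }
  rw [Fintype.card_congr e, Fintype.card_prod, Fintype.card_embedding_eq,
    Fintype.card_embedding_eq]
  have hcard1 : Fintype.card {i // i ∈ I} = I.card := Fintype.card_coe I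
  have hcard2 : Fintype.card {x // x ∈ C} = I.card := by
    rw [Fintype.card_coe]; exact hCcard
  have hcard3 : Fintype.card {i // i ∉ I} = k - I.card := by
    rw [Fintype.card_subtype_compl]
    simp [Fintype.card_coe]
  have hcard4 : Fintype.card {x // x ∈ D} = n - k - I.card := by
    rw [Fintype.card_coe, hD, Finset.card_sdiff_of_subset hCsub, Finset.card_sdiff_of_subset (Finset.subset_univ R),
      Finset.card_univ, Fintype.card_fin, hR, hCcard]
  rw [hcard1, hcard2, hcard3, hcard4, Nat.descFactorial_self]
lemma sum_over_b {a : Fin k → Fin n} (ha : Function.Injective a)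
    (haR : Finset.image a Finset.univ = R) (hR : R.card = k) (I : Finset (Fin k)) :
    ∑ b ∈ Finset.univ.filter (fun b : Fin k → Fin n =>
        Function.Injective (Sum.elim a b)), q (tset I a b) =
    ((I.card).factorial * (n - k - I.card).descFactorial (k - I.card) : ℕ) *
      ∑ C ∈ (Finset.univ \ R).powersetCard I.card, q (Finset.image a Iᶜ ∪ C) := by
  classical
  set Eb := Finset.univ.filter (fun b : Fin k → Fin n =>
    Function.Injective (Sum.elim a b)) with hEb
  have hmaps : ∀ b ∈ Eb, Finset.image b I ∈ (Finset.univ \ R).powersetCard I.card := by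
    intro b hb
    rw [hEb, Finset.mem_filter] at hb
    have hab := hb.2
    rw [Finset.mem_powersetCard]
    constructor
    · intro x hx
      obtain ⟨i, -, rfl⟩ := Finset.mem_image.mp hx
      refine Finset.mem_sdiff.mpr ⟨Finset.mem_univ _, fun hbR => ?_⟩
      rw [← haR] at hbR
      obtain ⟨i', -, hi'⟩ := Finset.mem_image.mp hbR
      exact ne_ab hab i' i hi'
    · exact Finset.card_image_of_injective _ (inj_b hab)
  rw [← Finset.sum_fiberwise_of_maps_to hmaps (fun b => q (tset I a b))]
  rw [Finset.mul_sum]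
  apply Finset.sum_congr rfl
  intro C hC
  have hinner : ∀ b ∈ Eb.filter (fun b => Finset.image b I = C),
      q (tset I a b) = q (Finset.image a Iᶜ ∪ C) := by
    intro b hb
    rw [Finset.mem_filter] at hb
    rw [tset_union, hb.2]
  rw [Finset.sum_congr rfl hinner, Finset.sum_const, nsmul_eq_mul]
  congr 1
  exact_mod_cast congrArg (Nat.cast : ℕ → ℝ) (fiber_count ha haR hR I hC)

lemma sum_IC {a : Fin k → Fin n} (ha : Function.Injective a)
    (haR : Finset.image a Finset.univ = R) (hR : R.card = k) {j : ℕ} (hj : j ≤ k) :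
    ∑ I ∈ (Finset.univ : Finset (Fin k)).powersetCard j,
      ∑ C ∈ (Finset.univ \ R).powersetCard j, q (Finset.image a Iᶜ ∪ C) =
    Nsum k q R (k - j) := by
  classical
  rw [← Finset.sum_product']
  unfold Nsum
  have haRmem : ∀ x : Fin n, x ∈ R ↔ ∃ i, a i = x := by
    intro x; rw [← haR]; simp [Finset.mem_image]
  have hkey : ∀ p : Finset (Fin k) × Finset (Fin n),
      p ∈ (Finset.univ : Finset (Fin k)).powersetCard j ×ˢ (Finset.univ \ R).powersetCard j →
      (Finset.image a p.1ᶜ ∪ p.2) ∈ (Finset.univ.powersetCard k).filter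
        (fun T => (T ∩ R).card = k - j) ∧
      (Finset.image a p.1ᶜ ∪ p.2) ∩ R = Finset.image a p.1ᶜ ∧
      (Finset.image a p.1ᶜ ∪ p.2) \ R = p.2 := by
    rintro ⟨I, C⟩ hp
    rw [Finset.mem_product, Finset.mem_powersetCard, Finset.mem_powersetCard] at hp
    obtain ⟨⟨-, hI⟩, hCsub, hCcard⟩ := hp
    have hAsubR : Finset.image a Iᶜ ⊆ R := by
      intro x hx
      obtain ⟨i, -, rfl⟩ := Finset.mem_image.mp hx
      rw [haRmem]; exact ⟨i, rfl⟩
    have hCnR : ∀ x ∈ C, x ∉ R := fun x hx => (Finset.mem_sdiff.mp (hCsub hx)).2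
    have hAcard : (Finset.image a Iᶜ).card = k - j := by
      rw [Finset.card_image_of_injective _ ha, Finset.card_compl, Fintype.card_fin, hI]
    have hdisj : Disjoint (Finset.image a Iᶜ) C := by
      rw [Finset.disjoint_left]
      intro x hx hxC
      exact hCnR x hxC (hAsubR hx)
    have hinter : (Finset.image a Iᶜ ∪ C) ∩ R = Finset.image a Iᶜ := by
      ext x
      simp only [Finset.mem_inter, Finset.mem_union]
      constructor
      · rintro ⟨hx | hx, hxR⟩
        · exact hx
        · exact absurd hxR (hCnR x hx)
      · intro hx; exact ⟨Or.inl hx, hAsubR hx⟩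
    have hsdiff : (Finset.image a Iᶜ ∪ C) \ R = C := by
      ext x
      simp only [Finset.mem_sdiff, Finset.mem_union]
      constructor
      · rintro ⟨hx | hx, hxR⟩
        · exact absurd (hAsubR hx) hxR
        · exact hx
      · intro hx; exact ⟨Or.inr hx, hCnR x hx⟩
    refine ⟨?_, hinter, hsdiff⟩
    rw [Finset.mem_filter, Finset.mem_powersetCard]
    refine ⟨⟨Finset.subset_univ _, ?_⟩, by rw [hinter, hAcard]⟩
    rw [Finset.card_union_of_disjoint hdisj, hAcard, hCcard]
    omega
  apply Finset.sum_nbij' (fun p => Finset.image a p.1ᶜ ∪ p.2)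
    (fun T => (Finset.univ.filter (fun i => a i ∉ T), T \ R))
  · intro p hp; exact (hkey p hp).1
  · intro T hT
    rw [Finset.mem_filter, Finset.mem_powersetCard] at hT
    obtain ⟨⟨-, hTcard⟩, hTR⟩ := hT
    rw [Finset.mem_product, Finset.mem_powersetCard, Finset.mem_powersetCard]
    have h1 : Finset.image a ((Finset.univ.filter (fun i => a i ∉ T))ᶜ) = T ∩ R := by
      rw [Finset.compl_filter]
      ext x
      simp only [Finset.mem_image, Finset.mem_filter, Finset.mem_univ, true_and,
        Finset.mem_inter, not_not]
      constructor
      · rintro ⟨i, hi, rfl⟩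
        exact ⟨hi, (haRmem _).mpr ⟨i, rfl⟩⟩
      · rintro ⟨hxT, hxR⟩
        obtain ⟨i, rfl⟩ := (haRmem x).mp hxR
        exact ⟨i, hxT, rfl⟩
    have h2 : ((Finset.univ.filter (fun i => a i ∉ T))ᶜ).card = k - j := by
      have := Finset.card_image_of_injective
        ((Finset.univ.filter (fun i => a i ∉ T))ᶜ) ha
      rw [h1, hTR] at this
      omega
    have h3 : (Finset.univ.filter (fun i : Fin k => a i ∉ T)).card = j := by
      have hcompl := Finset.card_compl (Finset.univ.filter (fun i : Fin k => a i ∉ T))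
      rw [Fintype.card_fin] at hcompl
      have h4 : (Finset.univ.filter (fun i : Fin k => a i ∉ T)).card ≤ k := by
        have := Finset.card_filter_le Finset.univ (fun i : Fin k => a i ∉ T)
        simpa using this
      omega
    have h5 : (T \ R).card = j := by
      have := Finset.card_inter_add_card_sdiff T R
      rw [hTcard, hTR] at this
      omega
    exact ⟨⟨Finset.subset_univ _, h3⟩, Finset.sdiff_subset_sdiff (Finset.subset_univ T)
      (le_refl R), h5⟩
  · rintro ⟨I, C⟩ hp
    obtain ⟨-, hinter, hsdiff⟩ := hkey (I, C) hp
    rw [Finset.mem_product, Finset.mem_powersetCard, Finset.mem_powersetCard] at hp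
    obtain ⟨⟨-, hI⟩, hCsub, hCcard⟩ := hp
    have : Finset.univ.filter (fun i => a i ∉ Finset.image a Iᶜ ∪ C) = I := by
      ext i
      simp only [Finset.mem_filter, Finset.mem_univ, true_and, Finset.mem_union]
      constructor
      · intro h
        by_contra hiI
        exact h (Or.inl (Finset.mem_image.mpr ⟨i, Finset.mem_compl.mpr hiI, rfl⟩))
      · intro hiI
        rintro (hx | hx)
        · obtain ⟨i', hi', hii'⟩ := Finset.mem_image.mp hx
          rw [ha hii'] at hi'
          exact Finset.mem_compl.mp hi' hiI
        · have : a i ∈ R := (haRmem _).mpr ⟨i, rfl⟩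
          exact (Finset.mem_sdiff.mp (hCsub hx)).2 this
    rw [Prod.mk.injEq]
    exact ⟨this, hsdiff⟩
  · intro T hT
    rw [Finset.mem_filter, Finset.mem_powersetCard] at hT
    obtain ⟨⟨-, hTcard⟩, hTR⟩ := hT
    have h1 : Finset.image a ((Finset.univ.filter (fun i => a i ∉ T))ᶜ) = T ∩ R := by
      rw [Finset.compl_filter]
      ext x
      simp only [Finset.mem_image, Finset.mem_filter, Finset.mem_univ, true_and,
        Finset.mem_inter, not_not]
      constructor
      · rintro ⟨i, hi, rfl⟩
        exact ⟨hi, (haRmem _).mpr ⟨i, rfl⟩⟩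
      · rintro ⟨hxT, hxR⟩
        obtain ⟨i, rfl⟩ := (haRmem x).mp hxR
        exact ⟨i, hxT, rfl⟩
    rw [h1]
    ext x
    simp only [Finset.mem_union, Finset.mem_inter, Finset.mem_sdiff]
    by_cases hxR : x ∈ R <;> by_cases hxT : x ∈ T <;> tauto
  · intro p hp
    rfl
lemma crux (hk : 1 ≤ k) (hn : 2 * k ≤ n)
    (hq0 : Diff0 k q)
    (hharm : ∀ S : Finset (Fin n), S.card = k - 1 →
      ∑ T ∈ (Finset.univ.powersetCard k).filter (fun T => S ⊆ T), q T = 0)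
    (hR : R.card = k) : q R = 0 := by
  classical
  obtain ⟨a, ha, haR⟩ : ∃ a : Fin k → Fin n,
      Function.Injective a ∧ Finset.image a Finset.univ = R := by
    have hinj : Function.Injective (fun i => (R.orderIsoOfFin hR i : Fin n)) := by
      intro i j hij
      exact (R.orderIsoOfFin hR).injective (Subtype.ext hij)
    refine ⟨fun i => (R.orderIsoOfFin hR i : Fin n), hinj, ?_⟩
    apply Finset.eq_of_subset_of_card_le
    · intro x hx
      obtain ⟨i, -, rfl⟩ := Finset.mem_image.mp hx
      exact (R.orderIsoOfFin hR i).2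
    · rw [Finset.card_image_of_injective _ hinj, Finset.card_univ, Fintype.card_fin, hR]
  set Eb := Finset.univ.filter (fun b : Fin k → Fin n =>
    Function.Injective (Sum.elim a b)) with hEb
  have h0 : ∑ b ∈ Eb, ∑ I : Finset (Fin k), (-1 : ℝ) ^ I.card * q (tset I a b) = 0 := by
    apply Finset.sum_eq_zero
    intro b hb
    rw [hEb, Finset.mem_filter] at hb
    exact hq0 a b hb.2
  rw [Finset.sum_comm] at h0
  have h1 : ∀ I : Finset (Fin k),
      (∑ b ∈ Eb, (-1 : ℝ) ^ I.card * q (tset I a b)) =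
      (-1 : ℝ) ^ I.card *
        (((I.card).factorial * (n - k - I.card).descFactorial (k - I.card) : ℕ) *
          ∑ C ∈ (Finset.univ \ R).powersetCard I.card, q (Finset.image a Iᶜ ∪ C)) := by
    intro I
    rw [← Finset.mul_sum, hEb, sum_over_b ha haR hR I]
  rw [Finset.sum_congr rfl (fun I _ => h1 I)] at h0
  rw [show (Finset.univ : Finset (Finset (Fin k))) =
    (Finset.univ : Finset (Fin k)).powerset from (Finset.powerset_univ).symm,
    Finset.sum_powerset, Finset.card_univ, Fintype.card_fin] at h0
  have h3 : ∀ j ∈ Finset.range (k + 1),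
      (∑ I ∈ (Finset.univ : Finset (Fin k)).powersetCard j,
        (-1 : ℝ) ^ I.card *
          (((I.card).factorial * (n - k - I.card).descFactorial (k - I.card) : ℕ) *
            ∑ C ∈ (Finset.univ \ R).powersetCard I.card, q (Finset.image a Iᶜ ∪ C))) =
      ((j.factorial * (n - k - j).descFactorial (k - j) : ℕ) : ℝ) *
        ((k.choose j : ℝ) * q R) := by
    intro j hj
    rw [Finset.mem_range] at hj
    have hjk : j ≤ k := by omega
    have hcongr : ∀ I ∈ (Finset.univ : Finset (Fin k)).powersetCard j,
        (-1 : ℝ) ^ I.card *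
          (((I.card).factorial * (n - k - I.card).descFactorial (k - I.card) : ℕ) :ℝ) *
            (∑ C ∈ (Finset.univ \ R).powersetCard I.card, q (Finset.image a Iᶜ ∪ C)) =
        (-1 : ℝ) ^ j *
          (((j.factorial * (n - k - j).descFactorial (k - j) : ℕ)) : ℝ) *
            ∑ C ∈ (Finset.univ \ R).powersetCard j, q (Finset.image a Iᶜ ∪ C) := by
      intro I hI
      rw [(Finset.mem_powersetCard.mp hI).2]
    calc (∑ I ∈ (Finset.univ : Finset (Fin k)).powersetCard j,
        (-1 : ℝ) ^ I.card *
          (((I.card).factorial * (n - k - I.card).descFactorial (k - I.card) : ℕ) *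
            ∑ C ∈ (Finset.univ \ R).powersetCard I.card, q (Finset.image a Iᶜ ∪ C)))
        = ∑ I ∈ (Finset.univ : Finset (Fin k)).powersetCard j,
          (-1 : ℝ) ^ j *
            (((j.factorial * (n - k - j).descFactorial (k - j) : ℕ)) : ℝ) *
              ∑ C ∈ (Finset.univ \ R).powersetCard j, q (Finset.image a Iᶜ ∪ C) := by
          apply Finset.sum_congr rfl
          intro I hI
          rw [← mul_assoc]
          exact hcongr I hI
      _ = (-1 : ℝ) ^ j *
            (((j.factorial * (n - k - j).descFactorial (k - j) : ℕ)) : ℝ) *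
            ∑ I ∈ (Finset.univ : Finset (Fin k)).powersetCard j,
              ∑ C ∈ (Finset.univ \ R).powersetCard j, q (Finset.image a Iᶜ ∪ C) := by
          rw [Finset.mul_sum]
      _ = (-1 : ℝ) ^ j *
            (((j.factorial * (n - k - j).descFactorial (k - j) : ℕ)) : ℝ) *
            Nsum k q R (k - j) := by rw [sum_IC ha haR hR hjk]
      _ = (-1 : ℝ) ^ j *
            (((j.factorial * (n - k - j).descFactorial (k - j) : ℕ)) : ℝ) *
            ((-1 : ℝ) ^ j * (k.choose j) * q R) := by
          rw [Nsum_closed hk hharm hR j hjk]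
      _ = ((-1 : ℝ) ^ j * (-1 : ℝ) ^ j) *
            ((((j.factorial * (n - k - j).descFactorial (k - j) : ℕ)) : ℝ) *
              ((k.choose j : ℝ) * q R)) := by ring
      _ = ((j.factorial * (n - k - j).descFactorial (k - j) : ℕ) : ℝ) *
            ((k.choose j : ℝ) * q R) := by
          rw [← mul_pow]
          norm_num
  rw [Finset.sum_congr rfl h3] at h0
  have h4 : (∑ j ∈ Finset.range (k + 1),
      ((j.factorial * (n - k - j).descFactorial (k - j) : ℕ) : ℝ) * (k.choose j : ℝ)) * q R
      = 0 := by
    rw [Finset.sum_mul, ← h0]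
    apply Finset.sum_congr rfl
    intro j _
    ring
  have h5 : (0 : ℝ) < ∑ j ∈ Finset.range (k + 1),
      ((j.factorial * (n - k - j).descFactorial (k - j) : ℕ) : ℝ) * (k.choose j : ℝ) := by
    apply Finset.sum_pos
    · intro j hj
      rw [Finset.mem_range] at hj
      have hjk : j ≤ k := by omega
      have hw : 0 < j.factorial * (n - k - j).descFactorial (k - j) := by
        apply Nat.mul_pos (Nat.factorial_pos j)
        apply Nat.pos_of_ne_zero
        rw [Ne, Nat.descFactorial_eq_zero_iff_lt]
        omega
      have hc : 0 < k.choose j := Nat.choose_pos hjk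
      exact mul_pos (by exact_mod_cast hw) (by exact_mod_cast hc)
    · exact ⟨0, Finset.mem_range.mpr (by omega)⟩
  have := mul_eq_zero.mp h4
  rcases this with h | h
  · exact absurd h (ne_of_gt h5)
  · exact h
section final

noncomputable def Umap (n k : ℕ) :
    (Finset (Fin n) → ℝ) →ₗ[ℝ] EuclideanSpace ℝ (Finset (Fin n)) where
  toFun g := WithLp.toLp 2 fun R => if R.card = k then ∑ S ∈ R.powersetCard (k - 1), g S else 0
  map_add' g₁ g₂ := by
    ext R
    simp only [PiLp.add_apply, PiLp.toLp_apply]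
    by_cases h : R.card = k <;> simp [h, Finset.sum_add_distrib]
  map_smul' c g := by
    ext R
    simp only [PiLp.smul_apply, PiLp.toLp_apply, RingHom.id_apply, smul_eq_mul]
    by_cases h : R.card = k <;> simp [h, Finset.mul_sum]

lemma exists_h (hk : 1 ≤ k) (hn : 2 * k ≤ n) (f : Finset (Fin n) → ℝ) (hf : Diff0 k f) :
    ∃ h : Finset (Fin n) → ℝ, ∀ R ∈ (Finset.univ : Finset (Fin n)).powersetCard k,
      f R = ∑ S ∈ R.powersetCard (k - 1), h S := by
  classical
  set M := LinearMap.range (Umap n k) with hM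
  set f' : EuclideanSpace ℝ (Finset (Fin n)) :=
    WithLp.toLp 2 (fun R => if R.card = k then f R else 0) with hf'
  obtain ⟨p, hpM, e, heM, hsum⟩ := M.exists_add_mem_mem_orthogonal f'
  rw [hM, LinearMap.mem_range] at hpM
  obtain ⟨g, hg⟩ := hpM
  set qe : Finset (Fin n) → ℝ := fun R => f' R - p R with hqe
  have hqe_eq : ∀ R, qe R = e R := by
    intro R
    have := congrFun (congrArg (fun (x : EuclideanSpace ℝ (Finset (Fin n))) => x.ofLp) hsum) R
    have h2 : f' R = p R + e R := this
    rw [hqe]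
    dsimp only
    linarith [h2]
  -- harmonicity of qe
  have hharm : ∀ S : Finset (Fin n), S.card = k - 1 →
      ∑ T ∈ (Finset.univ.powersetCard k).filter (fun T => S ⊆ T), qe T = 0 := by
    intro S hS
    have hv : Umap n k (fun S' => if S' = S then (1 : ℝ) else 0) ∈ M := by
      rw [hM]; exact LinearMap.mem_range_self _ _
    have hinner := (Submodule.mem_orthogonal M e).mp heM _ hv
    set v := Umap n k (fun S' => if S' = S then (1 : ℝ) else 0) with hvdef
    have hv_apply : ∀ T : Finset (Fin n),
        v T = if T.card = k ∧ S ⊆ T then 1 else 0 := by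
      intro T
      rw [hvdef]
      show (if T.card = k then ∑ S' ∈ T.powersetCard (k - 1),
        (if S' = S then (1:ℝ) else 0) else 0) = _
      by_cases h1 : T.card = k
      · rw [if_pos h1, Finset.sum_ite_eq' (T.powersetCard (k - 1)) S (fun _ => (1:ℝ))]
        by_cases h2 : S ⊆ T
        · rw [if_pos (Finset.mem_powersetCard.mpr ⟨h2, hS⟩), if_pos ⟨h1, h2⟩]
        · rw [if_neg (fun hc => h2 (Finset.mem_powersetCard.mp hc).1),
            if_neg (fun hc => h2 hc.2)]
      · rw [if_neg h1, if_neg (fun hc => h1 hc.1)]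
    have hinner2 : (0:ℝ) = ∑ T : Finset (Fin n), v T * e T := by
      rw [← hinner]
      rw [PiLp.inner_apply]
      apply Finset.sum_congr rfl
      intro T _
      simp [RCLike.inner_apply, conj_trivial, mul_comm]
    have hstep : ∑ T : Finset (Fin n), v T * e T =
        ∑ T ∈ (Finset.univ.powersetCard k).filter (fun T => S ⊆ T), qe T := by
      have hset : (Finset.univ.powersetCard k).filter (fun T : Finset (Fin n) => S ⊆ T) =
          Finset.univ.filter (fun T : Finset (Fin n) => T.card = k ∧ S ⊆ T) := by
        ext T
        simp only [Finset.mem_filter, Finset.mem_powersetCard, Finset.mem_univ, true_and]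
        exact ⟨fun h => ⟨h.1.2, h.2⟩, fun h => ⟨⟨Finset.subset_univ _, h.1⟩, h.2⟩⟩
      rw [hset, Finset.sum_filter]
      apply Finset.sum_congr rfl
      intro T _
      rw [hv_apply T, hqe_eq T]
      by_cases h1 : T.card = k ∧ S ⊆ T
      · rw [if_pos h1, if_pos h1, one_mul]
      · rw [if_neg h1, if_neg h1, zero_mul]
    rw [hstep] at hinner2
    exact hinner2.symm
  -- Diff0 of qe
  have hq0 : Diff0 k qe := by
    have h1 : Diff0 k f' := by
      rw [diff0_congr (g := f) (fun R hR => by rw [hf']; exact if_pos hR)]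
      exact hf
    have h2 : Diff0 k (fun R => p R) := by
      rw [diff0_congr (g := fun R => ∑ S ∈ R.powersetCard (k - 1), g S)
        (fun R hR => by rw [← hg]; exact if_pos hR)]
      exact diff0_U hk g
    exact diff0_sub h1 h2
  refine ⟨g, fun R hR => ?_⟩
  rw [Finset.mem_powersetCard] at hR
  have hq := crux hk hn hq0 hharm hR.2
  rw [hqe] at hq
  dsimp only at hq
  rw [hf'] at hq
  have hfp : f R = p R := by
    dsimp only at hq
    rw [if_pos hR.2] at hq
    linarith
  rw [hfp, ← hg]
  show (if R.card = k then ∑ S ∈ R.powersetCard (k - 1), g S else 0) = _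
  rw [if_pos hR.2]

end final
end stepC

end Stmt9

theorem stmt9 (n k : ℕ) (hk : 1 ≤ k) (hn : 2 * k ≤ n)
    (f : Finset (Fin n) → ℝ) :
    Wpow k k f = 0 ↔
    ∃ h : Finset (Fin n) → ℝ,
      ∀ R ∈ (Finset.univ : Finset (Fin n)).powersetCard k,
        f R = ∑ S ∈ R.powersetCard (k - 1), h S := by
  rw [Stmt9.wpow_zero_iff_diff0 hn f]
  constructor
  · intro hf
    exact Stmt9.exists_h hk hn f hf
  · rintro ⟨h, hh⟩
    rw [Stmt9.diff0_congr (g := fun R => ∑ S ∈ R.powersetCard (k - 1), h S)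
      (fun R hR => hh R (Finset.mem_powersetCard.mpr ⟨Finset.subset_univ _, hR⟩))]
    exact Stmt9.diff0_U hk h
end

section
/- Let V be a finite set of size n and let r, s ∈ ℕ with n ≥ r ≥ s. Let M^r_s be the real matrix with rows indexed by C(V,r) and columns indexed by C(V,s), whose entry at position (R,S) equals 1 if S ⊆ R and 0 otherwise. Then rank(M^r_s) = min{ C(n,r), C(n,s) }. -/
open Finset

lemma chmono_half {n a b : ℕ} (hab : a ≤ b) (hb : b ≤ n / 2) :
    n.choose a ≤ n.choose b := by
  induction b, hab using Nat.le_induction with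
  | base => exact le_refl _
  | succ b hb' ih =>
    exact le_trans (ih (by omega)) (Nat.choose_le_succ_of_lt_half_left (by omega))

lemma chmono {n a b : ℕ} (hab : a ≤ b) (h : a + b ≤ n) :
    n.choose a ≤ n.choose b := by
  rcases le_or_gt b (n / 2) with hb | hb
  · exact chmono_half hab hb
  · have hbn : b ≤ n := le_trans (Nat.le_add_left _ _) h
    rw [← Nat.choose_symm hbn]
    exact chmono_half (by omega) (by omega)

lemma count_between {V : Type*} [DecidableEq V] {S R : Finset V} {s ρ : ℕ}
    (hSR : S ⊆ R) (hS : S.card = s) (hR : R.card = ρ + 1) (hs : s ≤ ρ) :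
    ((R.powersetCard ρ).filter (fun R' => S ⊆ R')).card = ρ + 1 - s := by
  have h1 : ((R.powersetCard ρ).filter (fun R' => S ⊆ R')).card
      = ((R \ S).powersetCard (ρ - s)).card := by
    apply Finset.card_nbij' (fun R' => R' \ S) (fun X => S ∪ X)
    · intro R' hR'
      simp only [mem_coe, mem_filter, mem_powersetCard] at hR'
      obtain ⟨⟨h2, h3⟩, h4⟩ := hR'
      rw [mem_coe, mem_powersetCard]
      exact ⟨sdiff_subset_sdiff h2 (le_refl _), by rw [card_sdiff_of_subset h4, h3, hS]⟩
    · intro X hX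
      rw [mem_coe, mem_powersetCard] at hX
      obtain ⟨h2, h3⟩ := hX
      have hd : Disjoint S X :=
        Finset.disjoint_left.mpr fun a ha hax => (mem_sdiff.mp (h2 hax)).2 ha
      rw [mem_coe, mem_filter, mem_powersetCard]
      refine ⟨⟨union_subset hSR (h2.trans sdiff_subset), ?_⟩, subset_union_left⟩
      rw [card_union_of_disjoint hd, hS, h3]
      omega
    · intro R' hR'
      simp only [mem_coe, mem_filter, mem_powersetCard] at hR'
      exact union_sdiff_of_subset hR'.2
    · intro X hX
      rw [mem_coe, mem_powersetCard] at hX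
      exact union_sdiff_cancel_left
        (Finset.disjoint_left.mpr fun a ha hax => (mem_sdiff.mp (hX.1 hax)).2 ha)
  rw [h1, card_powersetCard, card_sdiff_of_subset hSR, hS, hR]
  have h2 : ρ + 1 - s - (ρ - s) = 1 := by omega
  rw [← Nat.choose_symm (by omega), h2, Nat.choose_one_right]

lemma upward {V : Type*} [Fintype V] [DecidableEq V] {s r : ℕ} (c : Finset V → ℝ)
    (hs : s ≤ r)
    (h : ∀ R : Finset V, R.card = r → ∑ S ∈ R.powersetCard s, c S = 0)
    (ρ : ℕ) (hρ : r ≤ ρ) :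
    ∀ R : Finset V, R.card = ρ → ∑ S ∈ R.powersetCard s, c S = 0 := by
  induction ρ, hρ using Nat.le_induction with
  | base => exact h
  | succ ρ hρ' ih =>
    intro R hR
    have hs' : s ≤ ρ := hs.trans hρ'
    have key : ∑ R' ∈ R.powersetCard ρ, ∑ S ∈ R'.powersetCard s, c S = 0 :=
      Finset.sum_eq_zero fun R' hR' => ih R' (mem_powersetCard.mp hR').2
    have swap : ∑ R' ∈ R.powersetCard ρ, ∑ S ∈ R'.powersetCard s, c S
        = ∑ S ∈ R.powersetCard s, ((ρ + 1 - s : ℕ) : ℝ) * c S := by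
      calc ∑ R' ∈ R.powersetCard ρ, ∑ S ∈ R'.powersetCard s, c S
          = ∑ R' ∈ R.powersetCard ρ, ∑ S ∈ R.powersetCard s,
              if S ⊆ R' then c S else 0 := by
            refine Finset.sum_congr rfl fun R' hR' => ?_
            have hsub : R' ⊆ R := (mem_powersetCard.mp hR').1
            have hps : R'.powersetCard s
                = (R.powersetCard s).filter (fun S => S ⊆ R') := by
              ext S
              simp only [mem_powersetCard, mem_filter]
              exact ⟨fun ⟨h1, h2⟩ => ⟨⟨h1.trans hsub, h2⟩, h1⟩,
                fun ⟨⟨_, h2⟩, h3⟩ => ⟨h3, h2⟩⟩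
            rw [hps, Finset.sum_filter]
        _ = ∑ S ∈ R.powersetCard s, ∑ R' ∈ R.powersetCard ρ,
              if S ⊆ R' then c S else 0 := Finset.sum_comm
        _ = ∑ S ∈ R.powersetCard s, ((ρ + 1 - s : ℕ) : ℝ) * c S := by
            refine Finset.sum_congr rfl fun S hS => ?_
            obtain ⟨hS1, hS2⟩ := mem_powersetCard.mp hS
            rw [← Finset.sum_filter, Finset.sum_const,
              count_between hS1 hS2 hR hs', nsmul_eq_mul]
    rw [swap, ← Finset.mul_sum] at key
    rcases mul_eq_zero.mp key with h0 | h0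
    · exfalso
      have : (0:ℝ) < ((ρ + 1 - s : ℕ) : ℝ) := by
        exact_mod_cast Nat.sub_pos_of_lt (by omega)
      linarith [this, h0.symm ▸ this]
    · exact h0

lemma neg_one_powerset_real {α : Type*} [DecidableEq α] (x : Finset α) :
    (∑ m ∈ x.powerset, (-1 : ℝ) ^ m.card) = if x = ∅ then 1 else 0 := by
  have := Finset.sum_powerset_neg_one_pow_card (x := x)
  have h2 : ((∑ m ∈ x.powerset, (-1 : ℤ) ^ m.card : ℤ) : ℝ)
      = ∑ m ∈ x.powerset, (-1 : ℝ) ^ m.card := by push_cast; rfl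
  rw [← h2, this]
  split <;> norm_num

lemma keyzero {V : Type*} [Fintype V] [DecidableEq V] {n r s : ℕ}
    (hV : Fintype.card V = n) (hs : s ≤ r) (hrs : r + s ≤ n) (c : Finset V → ℝ)
    (h : ∀ R : Finset V, R.card = r → ∑ S ∈ R.powersetCard s, c S = 0)
    (S₀ : Finset V) (hS₀ : S₀.card = s) : c S₀ = 0 := by
  have H : ∀ T : Finset V, T ⊆ S₀ →
      ∑ S ∈ ((univ : Finset V) \ T).powersetCard s, c S = 0 := by
    intro T hT
    have hTs : T.card ≤ s := hS₀ ▸ card_le_card hT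
    have hTc : ((univ : Finset V) \ T).card = n - T.card := by
      rw [card_sdiff_of_subset (subset_univ T), card_univ, hV]
    exact upward c hs h (n - T.card) (by omega) _ hTc
  have main : ∑ T ∈ S₀.powerset,
      (-1:ℝ)^T.card * ∑ S ∈ ((univ : Finset V) \ T).powersetCard s, c S = 0 :=
    Finset.sum_eq_zero fun T hT => by rw [H T (mem_powerset.mp hT), mul_zero]
  have stepA : ∀ T ∈ S₀.powerset,
      (-1:ℝ)^T.card * ∑ S ∈ ((univ : Finset V) \ T).powersetCard s, c S
        = ∑ S ∈ (univ : Finset V).powersetCard s,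
            if T ⊆ S₀ \ S then (-1:ℝ)^T.card * c S else 0 := by
    intro T hT
    have hTS₀ : T ⊆ S₀ := mem_powerset.mp hT
    rw [Finset.mul_sum, ← Finset.sum_filter]
    congr 1
    ext S
    simp only [mem_filter, mem_powersetCard, subset_sdiff, subset_univ, true_and]
    constructor
    · rintro ⟨hd, hc⟩
      exact ⟨hc, hTS₀, hd.symm⟩
    · rintro ⟨hc, _, hd⟩
      exact ⟨hd.symm, hc⟩
  rw [Finset.sum_congr rfl stepA, Finset.sum_comm] at main
  have stepC : ∀ S ∈ (univ : Finset V).powersetCard s,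
      (∑ T ∈ S₀.powerset, if T ⊆ S₀ \ S then (-1:ℝ)^T.card * c S else 0)
        = (if S₀ \ S = ∅ then (1:ℝ) else 0) * c S := by
    intro S _
    rw [← Finset.sum_filter]
    have hf : (S₀.powerset).filter (fun T => T ⊆ S₀ \ S) = (S₀ \ S).powerset := by
      ext T
      simp only [mem_filter, mem_powerset]
      exact ⟨fun ⟨_, h2⟩ => h2, fun h1 => ⟨h1.trans sdiff_subset, h1⟩⟩
    rw [hf, ← Finset.sum_mul, neg_one_powerset_real]
  rw [Finset.sum_congr rfl stepC] at main
  rw [Finset.sum_eq_single_of_mem S₀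
    (mem_powersetCard.mpr ⟨subset_univ _, hS₀⟩) ?_] at main
  · rw [sdiff_self] at main
    simpa using main
  · intro S hSmem hne
    have : ¬ (S₀ \ S = ∅) := by
      intro hempty
      apply hne
      have hsub : S₀ ⊆ S := sdiff_eq_empty_iff_subset.mp hempty
      exact (Finset.eq_of_subset_of_card_le hsub
        (by rw [hS₀, (mem_powersetCard.mp hSmem).2])).symm
    rw [if_neg this, zero_mul]

lemma rank_incl {V : Type*} [Fintype V] [DecidableEq V] (n a b : ℕ)
    (hV : Fintype.card V = n) (hb : b ≤ a) (hab : a + b ≤ n) :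
    (Matrix.of (fun (R : {R : Finset V // R ∈ (Finset.univ : Finset V).powersetCard a})
        (S : {S : Finset V // S ∈ (Finset.univ : Finset V).powersetCard b}) =>
        if S.1 ⊆ R.1 then (1 : ℝ) else 0)).rank = n.choose b := by
  set M : Matrix {R : Finset V // R ∈ (Finset.univ : Finset V).powersetCard a}
      {S : Finset V // S ∈ (Finset.univ : Finset V).powersetCard b} ℝ :=
    Matrix.of (fun R S => if S.1 ⊆ R.1 then (1 : ℝ) else 0) with hM
  have hinj : Function.Injective M.mulVecLin := by
    rw [← LinearMap.ker_eq_bot, LinearMap.ker_eq_bot']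
    intro c hc
    set c' : Finset V → ℝ := fun S =>
      if h : S ∈ (Finset.univ : Finset V).powersetCard b then c ⟨S, h⟩ else 0 with hc'
    have hzero : ∀ R : Finset V, R.card = a → ∑ S ∈ R.powersetCard b, c' S = 0 := by
      intro R hR
      have hRmem : R ∈ (Finset.univ : Finset V).powersetCard a :=
        mem_powersetCard.mpr ⟨subset_univ _, hR⟩
      have h0 : M.mulVecLin c ⟨R, hRmem⟩ = 0 := by rw [hc]; rfl
      rw [Matrix.mulVecLin_apply, Matrix.mulVec, dotProduct] at h0
      have hrw : ∀ S : {S : Finset V // S ∈ (Finset.univ : Finset V).powersetCard b},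
          M ⟨R, hRmem⟩ S * c S = if S.1 ⊆ R then c' S.1 else 0 := by
        intro S
        rw [hM]
        simp only [Matrix.of_apply, hc', dif_pos S.2]
        split <;> simp
      calc ∑ S ∈ R.powersetCard b, c' S
          = ∑ S ∈ ((Finset.univ : Finset V).powersetCard b).filter (fun S => S ⊆ R),
              c' S := by
            congr 1
            ext S
            simp only [mem_filter, mem_powersetCard, subset_univ, true_and]
            tauto
        _ = ∑ S ∈ (Finset.univ : Finset V).powersetCard b,
              if S ⊆ R then c' S else 0 := Finset.sum_filter _ _
        _ = ∑ S : {S : Finset V // S ∈ (Finset.univ : Finset V).powersetCard b},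
              if S.1 ⊆ R then c' S.1 else 0 := by
            rw [← Finset.sum_attach ((Finset.univ : Finset V).powersetCard b)
              (fun S => if S ⊆ R then c' S else 0)]
            rfl
        _ = ∑ S : {S : Finset V // S ∈ (Finset.univ : Finset V).powersetCard b},
              M ⟨R, hRmem⟩ S * c S := Finset.sum_congr rfl fun S _ => (hrw S).symm
        _ = 0 := h0
    funext S
    have h1 := keyzero hV hb hab c' hzero S.1 (mem_powersetCard.mp S.2).2
    have h2 : c' S.1 = c S := by simp only [hc', dif_pos S.2]
    simp only [Pi.zero_apply]
    rw [← h2]; exact h1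
  rw [Matrix.rank, LinearMap.finrank_range_of_inj hinj,
    Module.finrank_fintype_fun_eq_card, Fintype.card_coe, card_powersetCard,
    card_univ, hV]

lemma rank_reindex' {m n m' n' : Type*} [Fintype m] [Fintype n] [Fintype m'] [Fintype n']
    (e₁ : m ≃ m') (e₂ : n ≃ n') (A : Matrix m n ℝ) :
    (Matrix.reindex e₁ e₂ A).rank = A.rank := by
  rw [Matrix.rank, Matrix.rank, Matrix.mulVecLin_reindex, LinearMap.range_comp,
    LinearMap.range_comp, LinearEquiv.range, Submodule.map_top, LinearEquiv.finrank_map_eq]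

def complEquiv {V : Type*} [Fintype V] [DecidableEq V] {a : ℕ} (ha : a ≤ Fintype.card V) :
    {R : Finset V // R ∈ (Finset.univ : Finset V).powersetCard a} ≃
    {A : Finset V // A ∈ (Finset.univ : Finset V).powersetCard (Fintype.card V - a)} where
  toFun R := ⟨R.1ᶜ, mem_powersetCard.mpr ⟨subset_univ _, by
    rw [Finset.card_compl, (mem_powersetCard.mp R.2).2]⟩⟩
  invFun A := ⟨A.1ᶜ, mem_powersetCard.mpr ⟨subset_univ _, by
    rw [Finset.card_compl, (mem_powersetCard.mp A.2).2]; omega⟩⟩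
  left_inv R := Subtype.ext (compl_compl R.1)
  right_inv A := Subtype.ext (compl_compl A.1)

theorem stmt10 {V : Type*} [Fintype V] [DecidableEq V] (n r s : ℕ)
    (hV : Fintype.card V = n) (hs : s ≤ r) (hr : r ≤ n) :
    (Matrix.of (fun (R : {R : Finset V // R ∈ (Finset.univ : Finset V).powersetCard r})
        (S : {S : Finset V // S ∈ (Finset.univ : Finset V).powersetCard s}) =>
        if S.1 ⊆ R.1 then (1 : ℝ) else 0)).rank =
      min (n.choose r) (n.choose s) := by
  subst hV
  set n := Fintype.card V with hn
  rcases le_or_gt (r + s) n with h1 | h2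
  · rw [rank_incl n r s rfl hs h1,
      min_eq_right (chmono hs (by omega))]
  · have hsn : s ≤ n := hs.trans hr
    have key := rank_incl n (n - s) (n - r) rfl (by omega) (by omega)
    set M : Matrix {R : Finset V // R ∈ (Finset.univ : Finset V).powersetCard r}
        {S : Finset V // S ∈ (Finset.univ : Finset V).powersetCard s} ℝ :=
      Matrix.of (fun R S => if S.1 ⊆ R.1 then (1 : ℝ) else 0) with hM
    have hre : Matrix.reindex (complEquiv hsn) (complEquiv hr) (Matrix.transpose M) =
        Matrix.of (fun (R : {R : Finset V // R ∈ (Finset.univ : Finset V).powersetCard (n - s)})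
          (S : {S : Finset V // S ∈ (Finset.univ : Finset V).powersetCard (n - r)}) =>
          if S.1 ⊆ R.1 then (1 : ℝ) else 0) := by
      ext A B
      simp only [Matrix.reindex_apply, Matrix.submatrix_apply, Matrix.transpose_apply, hM,
        Matrix.of_apply]
      have hA : ((complEquiv hsn).symm A).1 = A.1ᶜ := rfl
      have hB : ((complEquiv hr).symm B).1 = B.1ᶜ := rfl
      rw [hA, hB]
      congr 1
      simp [Finset.compl_subset_compl]
    have : M.rank = n.choose (n - r) := by
      rw [← Matrix.rank_transpose M, ← rank_reindex' (complEquiv hsn) (complEquiv hr) (Matrix.transpose M), hre,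
        key]
    rw [this, Nat.choose_symm hr,
      min_eq_left ?_]
    rw [← Nat.choose_symm hr, ← Nat.choose_symm hsn]
    exact chmono (by omega) (by omega)
end

section
/- Let n, k ∈ ℕ with n ≥ 2k. Then |B_{n,k}| = C(n,k) − C(n,k−1), where B_{n,k} is the set of k-permutations B = (b₁,…,b_k) of [n] for which there exists a k-permutation A = (a₁,…,a_k) of [n] disjoint from B with b₁ < b₂ < ⋯ < b_k and aᵢ < bᵢ for every i ∈ [k]. -/
open Finset

/-- A ≺ B for k-permutations of Fin n: B is strictly increasing, a_i < b_i for all i,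
and all 2k entries are distinct (in particular A is a k-permutation disjoint from B). -/
def precRel {n k : ℕ} (a b : Fin k → Fin n) : Prop :=
  StrictMono b ∧ (∀ i, a i < b i) ∧ Function.Injective (Sum.elim a b)

lemma forward {n k : ℕ} (b : Fin k → Fin n) (h : ∃ a, precRel a b) :
    StrictMono b ∧ ∀ i : Fin k, 2 * (i : ℕ) + 1 ≤ (b i : ℕ) := by
  obtain ⟨a, hb, hlt, hinj⟩ := h
  refine ⟨hb, fun i => ?_⟩
  have hik : (i : ℕ) < k := i.isLt
  set e : Fin ((i : ℕ) + 1) → Fin k := fun j => ⟨j, by omega⟩ with he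
  have hei : Function.Injective e := by
    intro x y hxy
    simpa [he, Fin.ext_iff] using hxy
  set g : (Fin ((i:ℕ)+1) ⊕ Fin ((i:ℕ)+1)) → Fin n := Sum.elim a b ∘ Sum.map e e with hg
  have hgi : Function.Injective g := hinj.comp (Function.Injective.sumMap hei hei)
  have hsub : Finset.univ.image g ⊆ Finset.Iic (b i) := by
    intro x hx
    simp only [mem_image] at hx
    obtain ⟨j, _, rfl⟩ := hx
    have hle : ∀ j : Fin ((i:ℕ)+1), b (e j) ≤ b i := by
      intro j
      exact hb.monotone (by simp [he, Fin.le_def]; omega)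
    rcases j with j | j
    · simp only [hg, Function.comp, Sum.map, Sum.elim_inl, mem_Iic]
      exact le_of_lt (lt_of_lt_of_le (hlt (e j)) (hle j))
    · simp only [hg, Function.comp, Sum.map, Sum.elim_inr, mem_Iic]
      exact hle j
  have hc1 : (Finset.univ.image g).card = 2 * ((i:ℕ) + 1) := by
    rw [Finset.card_image_of_injective _ hgi]
    simp [two_mul]
  have hc2 : (Finset.Iic (b i)).card = (b i : ℕ) + 1 := by
    simp [Fin.card_Iic]  -- guess name
  have := Finset.card_le_card hsub
  omega

lemma backward {n k : ℕ} (hn : 2 * k ≤ n) (b : Fin k → Fin n)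
    (hb : StrictMono b) (hlow : ∀ i : Fin k, 2 * (i : ℕ) + 1 ≤ (b i : ℕ)) :
    ∃ a, precRel a b := by
  classical
  set s : Finset (Fin n) := (Finset.univ.image b)ᶜ with hs
  have himg : (Finset.univ.image b).card = k := by
    rw [Finset.card_image_of_injective _ hb.injective, Finset.card_univ, Fintype.card_fin]
  have hscard : s.card = n - k := by
    rw [hs, Finset.card_compl, himg, Fintype.card_fin]
  have hkle : k ≤ n - k := by omega
  set emb := s.orderEmbOfFin hscard with hemb
  set a : Fin k → Fin n := fun i => emb (Fin.castLE hkle i) with ha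
  have hamem : ∀ i, a i ∈ s := fun i => Finset.orderEmbOfFin_mem s hscard _
  have key : ∀ i, a i < b i := by
    intro i
    by_contra hcon
    push_neg at hcon
    have hinterc : ((Finset.Iio (b i)) ∩ Finset.univ.image b).card = (i : ℕ) := by
      have heq : (Finset.Iio (b i)) ∩ Finset.univ.image b
          = Finset.image (fun j : Fin k => b j) (Finset.Iio i) := by
        ext x
        simp only [Finset.mem_inter, Finset.mem_Iio, Finset.mem_image, Finset.mem_univ, true_and]
        constructor
        · rintro ⟨hx, j, rfl⟩
          exact ⟨j, hb.lt_iff_lt.mp hx, rfl⟩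
        · rintro ⟨j, hj, rfl⟩
          exact ⟨hb hj, j, rfl⟩
      rw [heq, Finset.card_image_of_injective _ hb.injective, Fin.card_Iio]
    have hsd := Finset.card_sdiff_add_card_inter (Finset.Iio (b i)) (Finset.univ.image b)
    rw [hinterc, Fin.card_Iio] at hsd
    have hcnt : ((Finset.Iio (b i)) \ Finset.univ.image b).card = (b i : ℕ) - (i : ℕ) := by omega
    -- now injection into image emb (Iio (castLE i))
    have hsub : (Finset.Iio (b i)) \ Finset.univ.image b
        ⊆ Finset.image emb (Finset.Iio (Fin.castLE hkle i)) := by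
      intro x hx
      rw [Finset.mem_sdiff, Finset.mem_Iio] at hx
      have hxs : x ∈ s := by rw [hs, Finset.mem_compl]; exact hx.2
      have : x ∈ Set.range emb := by rw [hemb, Finset.range_orderEmbOfFin]; exact hxs
      obtain ⟨l, rfl⟩ := this
      have : emb l < emb (Fin.castLE hkle i) := lt_of_lt_of_le hx.1 hcon
      rw [Finset.mem_image]
      exact ⟨l, Finset.mem_Iio.mpr (emb.lt_iff_lt.mp this), rfl⟩
    have hle := Finset.card_le_card hsub
    have hle2 : (Finset.image emb (Finset.Iio (Fin.castLE hkle i))).card ≤ (i : ℕ) := by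
      refine le_trans (Finset.card_image_le) ?_
      rw [Fin.card_Iio]
      simp
    have := hlow i
    omega
  refine ⟨a, hb, key, ?_⟩
  have hainj : Function.Injective a := by
    intro x y hxy
    have := emb.injective hxy
    exact Fin.castLE_injective hkle this
  refine Function.Injective.sumElim hainj hb.injective (fun x y h => ?_)
  have := hamem x
  rw [h, hs, Finset.mem_compl] at this
  exact this (Finset.mem_image.mpr ⟨y, Finset.mem_univ _, rfl⟩)

def Qb {n k : ℕ} (b : Fin k → Fin n) : Prop :=
  StrictMono b ∧ ∀ i : Fin k, 2 * (i : ℕ) + 1 ≤ (b i : ℕ)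

noncomputable def cnt (n k : ℕ) : ℕ := Nat.card {b : Fin k → Fin n // Qb b}

lemma cnt_zero {n k : ℕ} (hk : 1 ≤ k) (hn : n < 2 * k) : cnt n k = 0 := by
  rw [cnt, Nat.card_eq_zero]
  left
  constructor
  rintro ⟨b, _, hlow⟩
  have h1 := hlow ⟨k - 1, by omega⟩
  have h2 := (b ⟨k - 1, by omega⟩).isLt
  have h3 : ((⟨k - 1, by omega⟩ : Fin k) : ℕ) = k - 1 := rfl
  rw [h3] at h1
  omega

lemma cnt_one {n : ℕ} (hn : 1 ≤ n) : cnt n 1 = n - 1 := by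
  have e : {b : Fin 1 → Fin n // Qb b} ≃ Fin (n - 1) :=
    { toFun := fun b => ⟨(b.1 0 : ℕ) - 1, by
        have := (b.1 0).isLt
        have h0 : 1 ≤ (b.1 0 : ℕ) := by simpa using b.2.2 0
        omega⟩
      invFun := fun j => ⟨fun _ => ⟨(j : ℕ) + 1, by have := j.isLt; omega⟩,
        Subsingleton.strictMono _, fun i => by
          have : i = 0 := Subsingleton.elim _ _
          subst this; simp⟩
      left_inv := by
        rintro ⟨b, hb, hlow⟩
        have h0 : 1 ≤ (b 0 : ℕ) := by simpa using hlow 0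
        apply Subtype.ext
        funext i
        have : i = 0 := Subsingleton.elim _ _
        subst this
        apply Fin.ext
        simp only
        omega
      right_inv := by
        intro j
        apply Fin.ext
        simp }
  rw [cnt, Nat.card_congr e, Nat.card_eq_fintype_card, Fintype.card_fin]

lemma snoc_strictMono {n k : ℕ} {b : Fin k → Fin n} (hb : StrictMono b) :
    StrictMono (Fin.snoc (fun i => (b i).castSucc) (Fin.last n) : Fin (k+1) → Fin (n+1)) := by
  intro x y hxy
  rcases eq_or_ne y (Fin.last k) with rfl | hy
  · have hx : x ≠ Fin.last k := Fin.ne_of_lt hxy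
    obtain ⟨x', rfl⟩ := Fin.exists_castSucc_eq.mpr hx
    rw [Fin.snoc_castSucc, Fin.snoc_last]
    exact Fin.castSucc_lt_last _
  · obtain ⟨y', rfl⟩ := Fin.exists_castSucc_eq.mpr hy
    have hx : x ≠ Fin.last k := Fin.ne_of_lt (lt_trans hxy (Fin.castSucc_lt_last _))
    obtain ⟨x', rfl⟩ := Fin.exists_castSucc_eq.mpr hx
    rw [Fin.snoc_castSucc, Fin.snoc_castSucc]
    exact Fin.castSucc_lt_castSucc_iff.mpr (hb (Fin.castSucc_lt_castSucc_iff.mp hxy))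

lemma cnt_rec {n k : ℕ} (hn : 2 * k + 1 ≤ n) :
    cnt (n + 1) (k + 1) = cnt n (k + 1) + cnt n k := by
  classical
  set g : {b : Fin (k+1) → Fin n // Qb b} ⊕ {b : Fin k → Fin n // Qb b} →
      {b : Fin (k+1) → Fin (n+1) // Qb b} := fun x =>
    match x with
    | Sum.inl ⟨b, hb, hlow⟩ =>
      ⟨fun i => Fin.castLE (Nat.le_succ n) (b i),
        ⟨fun x y hxy => by
          rw [Fin.lt_def]; simp only [Fin.coe_castLE]; exact hb hxy,
         fun i => by simpa using hlow i⟩⟩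
    | Sum.inr ⟨b, hb, hlow⟩ =>
      ⟨Fin.snoc (fun i => (b i).castSucc) (Fin.last n), snoc_strictMono hb, by
        intro i
        rcases eq_or_ne i (Fin.last k) with rfl | hi
        · rw [Fin.snoc_last]
          simp [Fin.last]
          omega
        · obtain ⟨i', rfl⟩ := Fin.exists_castSucc_eq.mpr hi
          rw [Fin.snoc_castSucc]
          simpa using hlow i'⟩ with hg
  have hbij : Function.Bijective g := by
    constructor
    · rintro (⟨b1, hb1, hl1⟩ | ⟨b1, hb1, hl1⟩) (⟨b2, hb2, hl2⟩ | ⟨b2, hb2, hl2⟩) h <;>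
        simp only [hg, Subtype.mk.injEq] at h
      · congr 1
        apply Subtype.ext
        funext i
        have := congrFun (Subtype.mk.inj h) i
        exact Fin.castLE_injective _ this
      · exfalso
        have := congrFun (Subtype.mk.inj h) (Fin.last k)
        rw [Fin.snoc_last] at this
        have hv : ((b1 (Fin.last k)) : ℕ) = n := by
          simpa [Fin.ext_iff] using this
        have := (b1 (Fin.last k)).isLt
        omega
      · exfalso
        have := congrFun (Subtype.mk.inj h) (Fin.last k)
        rw [Fin.snoc_last] at this
        have hv : ((b2 (Fin.last k)) : ℕ) = n := by
          simpa [Fin.ext_iff] using this.symm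
        have := (b2 (Fin.last k)).isLt
        omega
      · congr 1
        apply Subtype.ext
        funext i
        have := congrFun (Subtype.mk.inj h) i.castSucc
        rw [Fin.snoc_castSucc, Fin.snoc_castSucc] at this
        exact Fin.castSucc_injective _ this
    · rintro ⟨b, hb, hlow⟩
      by_cases h : (b (Fin.last k) : ℕ) < n
      · have hlt : ∀ i, (b i : ℕ) < n := fun i =>
          lt_of_le_of_lt (by exact_mod_cast hb.monotone (Fin.le_last i)) h
        refine ⟨Sum.inl ⟨fun i => ⟨(b i : ℕ), hlt i⟩, fun x y hxy => ?_, fun i => ?_⟩, ?_⟩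
        · rw [Fin.lt_def]; exact hb hxy
        · simpa using hlow i
        · simp only [hg]
          apply Subtype.ext
          funext i
          apply Fin.ext
          simp
      · have hv : (b (Fin.last k) : ℕ) = n := by have := (b (Fin.last k)).isLt; omega
        have hlt : ∀ i : Fin k, (b i.castSucc : ℕ) < n := by
          intro i
          have : b i.castSucc < b (Fin.last k) := hb (Fin.castSucc_lt_last i)
          rw [Fin.lt_def, hv] at this
          exact this
        refine ⟨Sum.inr ⟨fun i => ⟨(b i.castSucc : ℕ), hlt i⟩, fun x y hxy => ?_, fun i => ?_⟩, ?_⟩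
        · rw [Fin.lt_def]
          exact hb (Fin.castSucc_lt_castSucc_iff.mpr hxy)
        · simpa using hlow i.castSucc
        · simp only [hg]
          apply Subtype.ext
          funext i
          induction i using Fin.lastCases with
          | last => simp [Fin.snoc_last, Fin.ext_iff, hv]
          | cast i' => simp [Fin.snoc_castSucc, Fin.ext_iff]
  rw [cnt, ← Nat.card_congr (Equiv.ofBijective g hbij), Nat.card_sum]
  rfl

lemma choose_mono {n j : ℕ} (h : 2 * j + 1 ≤ n) : n.choose j ≤ n.choose (j + 1) := by
  rcases eq_or_lt_of_le h with heq | hlt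
  · have h1 : j + 1 ≤ n := by omega
    have h2 : n - (j + 1) = j := by omega
    have h3 := Nat.choose_symm h1
    rw [h2] at h3
    omega
  · exact Nat.choose_le_succ_of_lt_half_left (by omega)

lemma cnt_eq : ∀ n k : ℕ, 1 ≤ k → 2 * k ≤ n + 1 → cnt n k = n.choose k - n.choose (k - 1) := by
  intro n
  induction n with
  | zero => intro k hk hn; omega
  | succ n ih =>
    intro k hk hn
    match k, hk with
    | 1, _ =>
      rw [cnt_one (by omega)]
      simp [Nat.choose_one_right]
    | (j+2), _ =>
      by_cases hcase : 2 * (j + 2) ≤ n + 1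
      · have hrec : cnt (n+1) (j+2) = cnt n (j+2) + cnt n (j+1) := cnt_rec (by omega)
        have e1 : cnt n (j+2) = n.choose (j+2) - n.choose (j+1) := ih (j+2) (by omega) hcase
        have e2 : cnt n (j+1) = n.choose (j+1) - n.choose j := ih (j+1) (by omega) (by omega)
        rw [hrec, e1, e2]
        simp only [show j + 2 - 1 = j + 1 from rfl]
        have p1 : (n+1).choose (j+2) = n.choose (j+1) + n.choose (j+2) := Nat.choose_succ_succ n (j+1)
        have p2 : (n+1).choose (j+1) = n.choose j + n.choose (j+1) := Nat.choose_succ_succ n j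
        have m1 : n.choose (j+1) ≤ n.choose (j+2) := choose_mono (by omega)
        have m2 : n.choose j ≤ n.choose (j+1) := choose_mono (by omega)
        omega
      · -- n + 1 = 2*(j+2) - 1 = 2*j + 3
        have hn1 : n + 1 = 2 * j + 3 := by omega
        rw [cnt_zero (by omega) (by omega)]
        have h1 : j + 2 ≤ n + 1 := by omega
        have : (n+1) - (j+2) = j + 1 := by omega
        rw [← Nat.choose_symm h1, this]
        simp

theorem stmt11 (n k : ℕ) (hk : 1 ≤ k) (hn : 2 * k ≤ n) :
    Nat.card {b : Fin k → Fin n // ∃ a : Fin k → Fin n, precRel a b} =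
      n.choose k - n.choose (k - 1) := by
  have e : {b : Fin k → Fin n // ∃ a : Fin k → Fin n, precRel a b}
      ≃ {b : Fin k → Fin n // Qb b} :=
    Equiv.subtypeEquivRight (fun b =>
      ⟨fun h => forward b h, fun h => backward hn b h.1 h.2⟩)
  rw [Nat.card_congr e]
  exact cnt_eq n k hk (by omega)
end

section
/- Let n, k ∈ ℕ with n ≥ 2k. For each B ∈ B_{n,k}, let λ(B) be any k-permutation of [n] satisfying λ(B) ≺ B. Then the family of functions { φ_{λ(B),B} : B ∈ B_{n,k} }, regarded as vectors in the real vector space of functions C([n],k) → ℝ, is linearly independent. -/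
open Finset

/-- The function φ_{A,B} on k-subsets of [n]. -/
noncomputable def phiAB {n k : ℕ} (a b : Fin k → Fin n) : Finset (Fin n) → ℝ :=
  fun R => if ∀ i, (R ∩ {a i, b i}).card = 1
    then (-1 : ℝ) ^ (R ∩ Finset.image b Finset.univ).card else 0

lemma pair_ne {n k : ℕ} {a b : Fin k → Fin n} (h : Function.Injective (Sum.elim a b)) :
    ∀ i j, a i ≠ b j := by
  intro i j hab
  have := h (a₁ := Sum.inl i) (a₂ := Sum.inr j) hab
  simp at this

lemma phi_self {n k : ℕ} {a b : Fin k → Fin n} (h : precRel a b) :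
    phiAB a b (Finset.image b Finset.univ) = (-1 : ℝ) ^ k := by
  obtain ⟨hb, hab, hinj⟩ := h
  have hbinj : Function.Injective b := hb.injective
  have hcond : ∀ i, ((Finset.image b Finset.univ) ∩ {a i, b i}).card = 1 := by
    intro i
    have hEq : (Finset.image b Finset.univ) ∩ {a i, b i} = {b i} := by
      ext x
      simp only [Finset.mem_inter, Finset.mem_image, Finset.mem_univ, true_and,
        Finset.mem_insert, Finset.mem_singleton]
      constructor
      · rintro ⟨⟨j, rfl⟩, h2 | h2⟩
        · exact absurd h2.symm (pair_ne hinj i j)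
        · exact h2
      · rintro rfl
        exact ⟨⟨i, rfl⟩, Or.inr rfl⟩
    rw [hEq]; simp
  rw [phiAB, if_pos hcond]
  congr 1
  rw [Finset.inter_self, Finset.card_image_of_injective _ hbinj, Finset.card_univ,
    Fintype.card_fin]

lemma phi_dom {n k : ℕ} {a b b₀ : Fin k → Fin n} (h : precRel a b) (hb₀ : StrictMono b₀)
    (hne : phiAB a b (Finset.image b₀ Finset.univ) ≠ 0) : ∀ i, b₀ i ≤ b i := by
  obtain ⟨hb, hab, hinj⟩ := h
  set S := Finset.image b₀ Finset.univ with hS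
  have hcond : ∀ i, (S ∩ {a i, b i}).card = 1 := by
    by_contra hc
    rw [phiAB, if_neg hc] at hne
    exact hne rfl
  have hone : ∀ i, ∃ x, S ∩ {a i, b i} = {x} := fun i => Finset.card_eq_one.mp (hcond i)
  choose c hc using hone
  have hcmem' : ∀ i, c i ∈ S ∩ {a i, b i} := fun i => by
    rw [hc i]; exact Finset.mem_singleton_self _
  have hcS : ∀ i, c i ∈ S := fun i => Finset.mem_of_mem_inter_left (hcmem' i)
  have hcmem : ∀ i, c i = a i ∨ c i = b i := fun i => by
    have := Finset.mem_of_mem_inter_right (hcmem' i)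
    simpa using this
  have hcle : ∀ i, c i ≤ b i := fun i => by
    rcases hcmem i with h1 | h1
    · rw [h1]; exact (hab i).le
    · rw [h1]
  have hcinj : Function.Injective c := by
    intro i j hij
    rcases hcmem i with h1 | h1 <;> rcases hcmem j with h2 | h2 <;> rw [h1, h2] at hij
    · simpa using hinj (a₁ := Sum.inl i) (a₂ := Sum.inl j) hij
    · simpa using hinj (a₁ := Sum.inl i) (a₂ := Sum.inr j) hij
    · simpa using hinj (a₁ := Sum.inr i) (a₂ := Sum.inl j) hij
    · simpa using hinj (a₁ := Sum.inr i) (a₂ := Sum.inr j) hij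
  intro i
  by_contra hlt
  push_neg at hlt
  have hmaps : ∀ j ∈ Finset.Iic i, c j ∈ Finset.image b₀ (Finset.Iio i) := by
    intro j hj
    have hji : j ≤ i := Finset.mem_Iic.mp hj
    have h1 : c j ≤ b i := (hcle j).trans (hb.monotone hji)
    obtain ⟨m, _, hm⟩ := Finset.mem_image.mp (hcS j)
    have hmlt : b₀ m < b₀ i := lt_of_le_of_lt (hm ▸ h1) hlt
    exact Finset.mem_image.mpr ⟨m, Finset.mem_Iio.mpr (hb₀.lt_iff_lt.mp hmlt), hm⟩
  have hcard := Finset.card_le_card_of_injOn c hmaps hcinj.injOn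
  have h1 : (Finset.Iic i).card = (i : ℕ) + 1 := by simp
  have h2 : (Finset.image b₀ (Finset.Iio i)).card ≤ (i : ℕ) := by
    refine le_trans Finset.card_image_le ?_
    simp
  omega

theorem stmt12 (n k : ℕ) (hk : 1 ≤ k) (hn : 2 * k ≤ n)
    (lam : (Fin k → Fin n) → (Fin k → Fin n))
    (hlam : ∀ b : Fin k → Fin n, (∃ a, precRel a b) → precRel (lam b) b) :
    LinearIndependent ℝ
      (fun B : {b : Fin k → Fin n // ∃ a, precRel a b} =>
        (fun R : {R : Finset (Fin n) // R.card = k} => phiAB (lam B.1) B.1 R.1)) := by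
  rw [linearIndependent_iff']
  intro s g hsum B hB
  by_contra hgB
  set t := s.filter (fun B => g B ≠ 0) with ht
  have htne : (t.image (fun B => B.1)).Nonempty :=
    ⟨B.1, Finset.mem_image.mpr ⟨B, Finset.mem_filter.mpr ⟨hB, hgB⟩, rfl⟩⟩
  obtain ⟨b₀, hb₀mem, hmax0⟩ := Finset.exists_maximal htne
  have hmax : ∀ x ∈ t.image (fun B => B.1), ¬ b₀ < x := fun x hx hlt =>
    lt_irrefl _ (lt_of_lt_of_le hlt (hmax0 hx hlt.le))
  obtain ⟨B₀, hB₀t, hB₀eq⟩ := Finset.mem_image.mp hb₀mem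
  have hB₀s : B₀ ∈ s := (Finset.mem_filter.mp hB₀t).1
  have hgB₀ : g B₀ ≠ 0 := (Finset.mem_filter.mp hB₀t).2
  have hsm₀ : StrictMono B₀.1 := B₀.2.choose_spec.1
  have hcardS : (Finset.image B₀.1 Finset.univ).card = k := by
    rw [Finset.card_image_of_injective _ hsm₀.injective, Finset.card_univ, Fintype.card_fin]
  set R₀ : {R : Finset (Fin n) // R.card = k} := ⟨Finset.image B₀.1 Finset.univ, hcardS⟩ with hR₀
  have h0 : ∑ C ∈ s, g C * phiAB (lam C.1) C.1 R₀.1 = 0 := by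
    have := congrFun hsum R₀
    simpa using this
  rw [Finset.sum_eq_single B₀ ?_ (fun h => absurd hB₀s h)] at h0
  · rw [show R₀.1 = Finset.image B₀.1 Finset.univ from rfl,
      phi_self (hlam B₀.1 B₀.2)] at h0
    have : g B₀ = 0 := by
      rcases mul_eq_zero.mp h0 with h | h
      · exact h
      · exact absurd h (by positivity)
    exact hgB₀ this
  · intro C hCs hCne
    by_cases hgC : g C = 0
    · rw [hgC, zero_mul]
    · by_cases hphi : phiAB (lam C.1) C.1 R₀.1 = 0
      · rw [hphi, mul_zero]
      · exfalso
        have hdom : ∀ i, B₀.1 i ≤ C.1 i := by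
          have := phi_dom (hlam C.1 C.2) (hB₀eq ▸ hsm₀) (by rw [← hB₀eq]; exact hphi)
          intro i; rw [hB₀eq]; exact this i
        have hle : b₀ ≤ C.1 := by rw [← hB₀eq]; exact fun i => hdom i
        have hCt : C.1 ∈ t.image (fun B => B.1) :=
          Finset.mem_image.mpr ⟨C, Finset.mem_filter.mpr ⟨hCs, hgC⟩, rfl⟩
        have : b₀ = C.1 := by
          by_contra hne
          exact hmax C.1 hCt (lt_of_le_of_ne hle hne)
        exact hCne (Subtype.ext (by rw [← this, hB₀eq]))
end

section
/- Let k ≥ 2 be an integer and let F be a (k,2,k)-pattern satisfying W^k(F) = W^{k−1}(F) = ⋯ = W^{k−g(k)}(F) = 0. Then F is homogeneous. -/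
open Finset

/-- Indicator function of a hypergraph, viewed as a real-valued function on finsets. -/
def hyperInd {V : Type*} [DecidableEq V] (G : Finset (Finset V)) : Finset V → ℝ :=
  fun S => if S ∈ G then 1 else 0

/-! ### Auxiliary lemmas -/

lemma sum_powerset_sign (r : ℕ) (h : ℕ → ℝ) :
    ∑ s ∈ (Finset.univ : Finset (Fin r)).powerset, (-1:ℝ)^s.card * h s.card
      = ∑ i ∈ Finset.range (r+1), (-1:ℝ)^i * (r.choose i) * h i := by
  rw [Finset.sum_powerset]
  simp only [card_univ, Fintype.card_fin]
  refine Finset.sum_congr rfl fun j hj => ?_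
  rw [Finset.sum_congr rfl (fun t ht => by rw [(Finset.mem_powersetCard.1 ht).2]),
    Finset.sum_const, Finset.card_powersetCard, card_univ, Fintype.card_fin]
  ring

lemma card_inter_pair {V : Type*} [DecidableEq V] (R : Finset V) {x y : V} (hxy : x ≠ y) :
    (R ∩ {x, y}).card = (if x ∈ R then 1 else 0) + (if y ∈ R then 1 else 0) := by
  have h1 : R ∩ {x, y} = (R ∩ {x}) ∪ (R ∩ {y}) := by
    rw [← Finset.inter_union_distrib_left]; rfl
  have hx : (R ∩ {x}).card = if x ∈ R then 1 else 0 := by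
    split
    · rw [Finset.inter_singleton_of_mem ‹_›]; simp
    · rw [Finset.inter_singleton_of_notMem ‹_›]; simp
  have hy : (R ∩ {y}).card = if y ∈ R then 1 else 0 := by
    split
    · rw [Finset.inter_singleton_of_mem ‹_›]; simp
    · rw [Finset.inter_singleton_of_notMem ‹_›]; simp
  rw [h1, Finset.card_union_of_disjoint, hx, hy]
  exact Finset.disjoint_left.2 (by aesop)

lemma signedAvg_eq_zero {V : Type*} [Fintype V] [DecidableEq V] {k r : ℕ}
    (f : Finset V → ℝ) (a b : Fin r → V)
    (hinj : Function.Injective (Sum.elim a b))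
    (hW : Wpow k r f = 0) : signedAvg k f a b = 0 := by
  set Φ := (Finset.univ : Finset ((Fin r → V) × (Fin r → V))).filter
      (fun p => Function.Injective (Sum.elim p.1 p.2)) with hΦ
  have hmem : (a, b) ∈ Φ := by simp only [hΦ, Finset.mem_filter, Finset.mem_univ, true_and]; exact hinj
  have hcard : (0:ℝ) < (Φ.card : ℝ) := by
    exact_mod_cast Finset.card_pos.2 ⟨_, hmem⟩
  have hsumnn : (0:ℝ) ≤ ∑ p ∈ Φ, (signedAvg k f p.1 p.2) ^ 2 :=
    Finset.sum_nonneg fun p _ => sq_nonneg _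
  have h0 : (∑ p ∈ Φ, (signedAvg k f p.1 p.2) ^ 2) / (Φ.card : ℝ) = 0 := by
    have := Real.sqrt_eq_zero'.1 hW
    have hq : (0:ℝ) ≤ (∑ p ∈ Φ, (signedAvg k f p.1 p.2) ^ 2) / (Φ.card : ℝ) :=
      div_nonneg hsumnn hcard.le
    exact le_antisymm this hq
  have hsum0 : ∑ p ∈ Φ, (signedAvg k f p.1 p.2) ^ 2 = 0 := by
    rcases div_eq_zero_iff.1 h0 with h | h
    · exact h
    · exact absurd h (by positivity)
  have := (Finset.sum_eq_zero_iff_of_nonneg fun p _ =>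
    sq_nonneg (signedAvg k f p.1 p.2)).1 hsum0 (a, b) hmem
  exact pow_eq_zero_iff (by norm_num) |>.1 this

lemma numerator_eq {V : Type*} [Fintype V] [DecidableEq V] {k r t : ℕ} (hrt : r + t = k)
    (P0 P1 : Finset V) (hP : Disjoint P0 P1) (hunion : P0 ∪ P1 = Finset.univ)
    (a b : Fin r → V) (ha : ∀ i, a i ∈ P1) (hb : ∀ i, b i ∈ P0)
    (hainj : Function.Injective a) (hbinj : Function.Injective b)
    (f : Finset V → ℝ) (A : ℕ → ℝ) (hf : ∀ R : Finset V, R.card = k → f R = A (R ∩ P0).card) :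
    ∑ R ∈ (Finset.univ.powersetCard k).filter (fun R => ∀ i, (R ∩ {a i, b i}).card = 1),
      (-1:ℝ)^(R ∩ Finset.image b Finset.univ).card * f R
    = ∑ C ∈ ((P0 \ Finset.image b Finset.univ) ∪ (P1 \ Finset.image a Finset.univ)).powersetCard t,
        ∑ s ∈ (Finset.univ : Finset (Fin r)).powerset,
          (-1:ℝ)^s.card * A (s.card + (C ∩ P0).card) := by
  classical
  set Aimg := Finset.image a Finset.univ with hAimg
  set Bimg := Finset.image b Finset.univ with hBimg
  set Pairs := Aimg ∪ Bimg with hPairs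
  set U := (P0 \ Bimg) ∪ (P1 \ Aimg) with hU
  have hab : ∀ i j, a i ≠ b j := fun i j h => by
    exact Finset.disjoint_right.1 hP (ha i) (h ▸ hb j)
  have haP : Aimg ⊆ P1 := by intro x hx; simp only [hAimg, Finset.mem_image] at hx
                             obtain ⟨i, _, rfl⟩ := hx; exact ha i
  have hbP : Bimg ⊆ P0 := by intro x hx; simp only [hBimg, Finset.mem_image] at hx
                             obtain ⟨i, _, rfl⟩ := hx; exact hb i
  have hUP : Disjoint U Pairs := by
    rw [Finset.disjoint_left]
    intro x hx hx2
    rcases Finset.mem_union.1 hx with h | h <;> rcases Finset.mem_union.1 hx2 with h2 | h2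
    · exact Finset.disjoint_left.1 hP (Finset.mem_sdiff.1 h).1 (haP h2)
    · exact (Finset.mem_sdiff.1 h).2 h2
    · exact (Finset.mem_sdiff.1 h).2 h2
    · exact Finset.disjoint_left.1 hP (hbP h2) (Finset.mem_sdiff.1 h).1
  have hPairsBiUnion : Pairs = Finset.univ.biUnion (fun i => ({a i, b i} : Finset V)) := by
    ext x
    simp [hPairs, hAimg, hBimg, Finset.mem_biUnion, or_comm]
    aesop
  have hpairdisj : ∀ i j : Fin r, i ≠ j → Disjoint ({a i, b i} : Finset V) {a j, b j} := by
    intro i j hij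
    rw [Finset.disjoint_left]
    intro x hx hx2
    simp only [Finset.mem_insert, Finset.mem_singleton] at hx hx2
    rcases hx with rfl | rfl <;> rcases hx2 with h | h
    · exact hij (hainj h)
    · exact hab i j h
    · exact hab j i h.symm
    · exact hij (hbinj h)
  rw [← Finset.sum_product']
  refine Finset.sum_nbij' (i := fun R => (R \ Pairs, Finset.univ.filter (fun i => b i ∈ R)))
    (j := fun p => (Finset.image b p.2 ∪ Finset.image a (Finset.univ \ p.2)) ∪ p.1) ?_ ?_ ?_ ?_ ?_
  · intro R hR
    simp only [Finset.mem_filter, Finset.mem_powersetCard_univ] at hR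
    obtain ⟨hRk, hRcross⟩ := hR
    have hinterPairs : (R ∩ Pairs).card = r := by
      rw [hPairsBiUnion, Finset.inter_biUnion, Finset.card_biUnion]
      · simp [hRcross]
      · intro i _ j _ hij
        exact Finset.disjoint_of_subset_left (Finset.inter_subset_right)
          (Finset.disjoint_of_subset_right (Finset.inter_subset_right) (hpairdisj i j hij))
    rw [Finset.mem_product]
    constructor
    · rw [Finset.mem_powersetCard]
      constructor
      · intro x hx
        rw [Finset.mem_sdiff] at hx
        have hxuniv : x ∈ P0 ∪ P1 := hunion ▸ Finset.mem_univ x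
        rw [hU, Finset.mem_union]
        rcases Finset.mem_union.1 hxuniv with h | h
        · exact Or.inl (Finset.mem_sdiff.2 ⟨h, fun hc => hx.2 (Finset.mem_union.2 (Or.inr hc))⟩)
        · exact Or.inr (Finset.mem_sdiff.2 ⟨h, fun hc => hx.2 (Finset.mem_union.2 (Or.inl hc))⟩)
      · show (R \ Pairs).card = t
        have := Finset.card_inter_add_card_sdiff R Pairs
        omega
    · simp
  · intro p hp
    rw [Finset.mem_product] at hp
    obtain ⟨hC, hs⟩ := hp
    rw [Finset.mem_powersetCard] at hC
    obtain ⟨hCU, hCt⟩ := hC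
    set C := p.1
    set s := p.2
    have hCP : Disjoint C Pairs := Finset.disjoint_of_subset_left hCU hUP
    have hmem_b : ∀ i : Fin r, b i ∈ (Finset.image b s ∪ Finset.image a (Finset.univ \ s)) ∪ C ↔ i ∈ s := by
      intro i
      simp only [Finset.mem_union, Finset.mem_image, Finset.mem_sdiff, Finset.mem_univ, true_and]
      constructor
      · rintro ((⟨j, hj, hbj⟩ | ⟨j, hj, hbj⟩) | hc)
        · rwa [← hbinj hbj]
        · exact absurd hbj (hab j i)
        · exact absurd (Finset.mem_union.2 (Or.inr (Finset.mem_image.2 ⟨i, Finset.mem_univ i, rfl⟩)))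
            (Finset.disjoint_left.1 hCP hc)
      · intro hi; exact Or.inl (Or.inl ⟨i, hi, rfl⟩)
    have hmem_a : ∀ i : Fin r, a i ∈ (Finset.image b s ∪ Finset.image a (Finset.univ \ s)) ∪ C ↔ i ∉ s := by
      intro i
      simp only [Finset.mem_union, Finset.mem_image, Finset.mem_sdiff, Finset.mem_univ, true_and]
      constructor
      · rintro ((⟨j, hj, hbj⟩ | ⟨j, hj, hbj⟩) | hc)
        · exact absurd hbj.symm (hab i j)
        · rwa [← hainj hbj]
        · exact absurd (Finset.mem_union.2 (Or.inl (Finset.mem_image.2 ⟨i, Finset.mem_univ i, rfl⟩)))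
            (Finset.disjoint_left.1 hCP hc)
      · intro hi; exact Or.inl (Or.inr ⟨i, hi, rfl⟩)
    rw [Finset.mem_filter, Finset.mem_powersetCard_univ]
    constructor
    · have hd1 : Disjoint (Finset.image b s) (Finset.image a (Finset.univ \ s)) := by
        rw [Finset.disjoint_left]
        rintro x hx hx2
        simp only [Finset.mem_image] at hx hx2
        obtain ⟨i, _, rfl⟩ := hx
        obtain ⟨j, _, hj⟩ := hx2
        exact hab j i hj
      have hd2 : Disjoint (Finset.image b s ∪ Finset.image a (Finset.univ \ s)) C := by
        refine Finset.disjoint_right.2 fun x hx hx2 => ?_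
        refine Finset.disjoint_left.1 hCP hx ?_
        rcases Finset.mem_union.1 hx2 with h | h
        · exact Finset.mem_union.2 (Or.inr (Finset.image_subset_image (Finset.subset_univ s) h))
        · exact Finset.mem_union.2 (Or.inl (Finset.image_subset_image (Finset.subset_univ _) h))
      rw [Finset.card_union_of_disjoint hd2, Finset.card_union_of_disjoint hd1,
        Finset.card_image_of_injective _ hbinj, Finset.card_image_of_injective _ hainj,
        Finset.card_sdiff_of_subset (Finset.subset_univ s), Finset.card_univ, Fintype.card_fin, hCt]
      have : s.card ≤ r := by
        have := Finset.card_le_card (Finset.subset_univ s)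
        simpa [Finset.card_univ] using this
      omega
    · intro i
      rw [card_inter_pair _ (hab i i)]
      by_cases hi : i ∈ s
      · rw [if_neg (fun h => (hmem_a i).1 h hi), if_pos ((hmem_b i).2 hi)]
      · rw [if_pos ((hmem_a i).2 hi), if_neg (fun h => hi ((hmem_b i).1 h))]
  · intro R hR
    simp only [Finset.mem_filter, Finset.mem_powersetCard_univ] at hR
    obtain ⟨hRk, hRcross⟩ := hR
    have hcross : ∀ i : Fin r, b i ∉ R → a i ∈ R := by
      intro i hbi
      have := hRcross i
      rw [card_inter_pair R (hab i i)] at this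
      by_cases h1 : a i ∈ R <;> simp_all
    apply Finset.Subset.antisymm
    · intro x hx
      simp only [Finset.mem_union, Finset.mem_image, Finset.mem_filter, Finset.mem_sdiff,
        Finset.mem_univ, true_and] at hx
      rcases hx with (⟨i, hi, rfl⟩ | ⟨i, hi, rfl⟩) | hx
      · exact hi
      · exact hcross i hi
      · exact hx.1
    · intro x hx
      simp only [Finset.mem_union, Finset.mem_image, Finset.mem_filter, Finset.mem_sdiff,
        Finset.mem_univ, true_and]
      by_cases hxp : x ∈ Pairs
      · rcases Finset.mem_union.1 hxp with h | h
        · obtain ⟨i, _, rfl⟩ := Finset.mem_image.1 h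
          have hbi : b i ∉ R := by
            have := hRcross i
            rw [card_inter_pair R (hab i i)] at this
            simp_all
          exact Or.inl (Or.inr ⟨i, hbi, rfl⟩)
        · obtain ⟨i, _, rfl⟩ := Finset.mem_image.1 h
          exact Or.inl (Or.inl ⟨i, hx, rfl⟩)
      · exact Or.inr ⟨hx, hxp⟩
  · intro p hp
    rw [Finset.mem_product] at hp
    obtain ⟨hC, hs⟩ := hp
    rw [Finset.mem_powersetCard] at hC
    obtain ⟨hCU, hCt⟩ := hC
    have hCP : Disjoint p.1 Pairs := Finset.disjoint_of_subset_left hCU hUP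
    have himgP : (Finset.image b p.2 ∪ Finset.image a (Finset.univ \ p.2)) ⊆ Pairs := by
      intro x hx
      rcases Finset.mem_union.1 hx with h | h
      · exact Finset.mem_union.2 (Or.inr (Finset.image_subset_image (Finset.subset_univ _) h))
      · exact Finset.mem_union.2 (Or.inl (Finset.image_subset_image (Finset.subset_univ _) h))
    have h1 : ((Finset.image b p.2 ∪ Finset.image a (Finset.univ \ p.2)) ∪ p.1) \ Pairs = p.1 := by
      apply Finset.Subset.antisymm
      · intro x hx
        rw [Finset.mem_sdiff] at hx
        rcases Finset.mem_union.1 hx.1 with h | h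
        · exact absurd (himgP h) hx.2
        · exact h
      · intro x hx
        rw [Finset.mem_sdiff]
        exact ⟨Finset.mem_union.2 (Or.inr hx), Finset.disjoint_left.1 hCP hx⟩
    have h2 : Finset.univ.filter (fun i => b i ∈ (Finset.image b p.2 ∪ Finset.image a (Finset.univ \ p.2)) ∪ p.1) = p.2 := by
      ext i
      simp only [Finset.mem_filter, Finset.mem_univ, true_and, Finset.mem_union, Finset.mem_image,
        Finset.mem_sdiff]
      constructor
      · rintro ((⟨j, hj, hbj⟩ | ⟨j, hj, hbj⟩) | hc)
        · rwa [← hbinj hbj]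
        · exact absurd hbj (hab j i)
        · exact absurd (Finset.mem_union.2 (Or.inr (Finset.mem_image.2 ⟨i, Finset.mem_univ i, rfl⟩)))
            (Finset.disjoint_left.1 hCP hc)
      · intro hi; exact Or.inl (Or.inl ⟨i, hi, rfl⟩)
    simp only [h1, h2]
  · intro R hR
    simp only [Finset.mem_filter, Finset.mem_powersetCard_univ] at hR
    obtain ⟨hRk, hRcross⟩ := hR
    have hRB : R ∩ Bimg = Finset.image b (Finset.univ.filter (fun i => b i ∈ R)) := by
      ext x
      simp only [Finset.mem_inter, hBimg, Finset.mem_image, Finset.mem_filter, Finset.mem_univ, true_and]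
      constructor
      · rintro ⟨hx, i, _, rfl⟩; exact ⟨i, hx, rfl⟩
      · rintro ⟨i, hi, rfl⟩; exact ⟨hi, i, rfl⟩
    have hcardB : (R ∩ Bimg).card = (Finset.univ.filter (fun i => b i ∈ R)).card := by
      rw [hRB, Finset.card_image_of_injective _ hbinj]
    have hsplit : (R ∩ P0).card = (Finset.univ.filter (fun i => b i ∈ R)).card + ((R \ Pairs) ∩ P0).card := by
      rw [← hcardB]
      have : R ∩ P0 = (R ∩ Bimg) ∪ ((R \ Pairs) ∩ P0) := by
        apply Finset.Subset.antisymm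
        · intro x hx
          rw [Finset.mem_inter] at hx
          by_cases hxp : x ∈ Pairs
          · rcases Finset.mem_union.1 hxp with h | h
            · exact absurd hx.2 (Finset.disjoint_right.1 hP (haP h))
            · exact Finset.mem_union.2 (Or.inl (Finset.mem_inter.2 ⟨hx.1, h⟩))
          · exact Finset.mem_union.2 (Or.inr (Finset.mem_inter.2 ⟨Finset.mem_sdiff.2 ⟨hx.1, hxp⟩, hx.2⟩))
        · intro x hx
          rcases Finset.mem_union.1 hx with h | h
          · rw [Finset.mem_inter] at h ⊢
            exact ⟨h.1, hbP h.2⟩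
          · rw [Finset.mem_inter] at h ⊢
            exact ⟨(Finset.mem_sdiff.1 h.1).1, h.2⟩
      rw [this, Finset.card_union_of_disjoint]
      refine Finset.disjoint_left.2 fun x hx hx2 => ?_
      rw [Finset.mem_inter] at hx hx2
      exact (Finset.mem_sdiff.1 hx2.1).2 (Finset.mem_union.2 (Or.inr hx.2))
    rw [hf R hRk, hcardB, hsplit]

noncomputable def Dsum (A : ℕ → ℝ) (r j : ℕ) : ℝ :=
  ∑ i ∈ Finset.range (r+1), (-1:ℝ)^i * (r.choose i) * A (i+j)

lemma pascalD (A : ℕ → ℝ) (r j : ℕ) :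
    Dsum A (r+1) j = Dsum A r j - Dsum A r (j+1) := by
  unfold Dsum
  have key : ∀ i, (-1:ℝ)^(i+1) * (((r+1).choose (i+1) : ℕ)) * A ((i+1)+j)
      = (-1:ℝ)^(i+1) * (r.choose (i+1)) * A ((i+1)+j)
        - (-1:ℝ)^i * (r.choose i) * A (i+(j+1)) := by
    intro i
    have harg : i+(j+1) = (i+1)+j := by omega
    rw [Nat.choose_succ_succ, harg]
    push_cast
    ring
  rw [Finset.sum_range_succ' _ (r+1), Finset.sum_congr rfl (fun i _ => key i),
    Finset.sum_sub_distrib]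
  have h2 : ∑ i ∈ Finset.range (r+1), (-1:ℝ)^(i+1) * (r.choose (i+1)) * A ((i+1)+j)
      = (∑ i ∈ Finset.range (r+1), (-1:ℝ)^i * (r.choose i) * A (i+j))
        - (-1:ℝ)^0 * (r.choose 0) * A (0+j) := by
    have h4 := Finset.sum_range_succ' (fun i => (-1:ℝ)^i * (r.choose i) * A (i+j)) (r+1)
    have h3 : ∑ i ∈ Finset.range (r+2), (-1:ℝ)^i * (r.choose i) * A (i+j)
        = ∑ i ∈ Finset.range (r+1), (-1:ℝ)^i * (r.choose i) * A (i+j) := by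
      rw [Finset.sum_range_succ]
      simp
    simp only [h3] at h4
    linarith
  rw [h2]
  simp
  ring

lemma g_k_mem (k : ℕ) : ∀ m : ℕ, 2 ≤ m → m ≤ k →
    ∀ α : ℕ → Bool,
    (∀ r ∈ Finset.Icc (m - k) m,
      ∑ i ∈ Finset.range (r+1), (-1:ℤ)^i * (r.choose i) * (if α i then 1 else 0) = 0) →
    ∀ i ≤ m, α i = α 0 := by
  intro m hm2 hmk α heq
  have hzero : ∀ i, i ≤ m → α i = false := by
    intro i
    induction i using Nat.strong_induction_on with
    | _ i IH =>
      intro him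
      have hi : i ∈ Finset.Icc (m - k) m := Finset.mem_Icc.2 ⟨by omega, him⟩
      have h := heq i hi
      rw [Finset.sum_range_succ] at h
      have hrest : ∑ j ∈ Finset.range i, (-1:ℤ)^j * (i.choose j) * (if α j then 1 else 0) = 0 := by
        apply Finset.sum_eq_zero
        intro j hj
        rw [IH j (Finset.mem_range.1 hj) (le_trans (le_of_lt (Finset.mem_range.1 hj)) him)]
        simp
      rw [hrest, zero_add, Nat.choose_self] at h
      cases hα : α i
      · rfl
      · rw [hα] at h
        simp at h
  intro i him
  rw [hzero i him, hzero 0 (by omega)]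

lemma sumElim_injective {V : Type*} {r : ℕ} (a b : Fin r → V)
    (hainj : Function.Injective a) (hbinj : Function.Injective b)
    (hab : ∀ i j, a i ≠ b j) : Function.Injective (Sum.elim a b) := by
  intro x y h
  cases x with
  | inl i => cases y with
    | inl j => simp only [Sum.elim_inl] at h; rw [hainj h]
    | inr j => exact absurd h (hab i j)
  | inr i => cases y with
    | inl j => exact absurd h.symm (hab j i)
    | inr j => simp only [Sum.elim_inr] at h; rw [hbinj h]

theorem stmt19 (k : ℕ) (hk : 2 ≤ k)
    (F : Finset (Finset (Fin (2 * k)))) (parts : Fin 2 → Finset (Fin (2 * k)))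
    (hunif : ∀ e ∈ F, e.card = k)
    (hcard : ∀ i, (parts i).card = k)
    (hdisj : ∀ i j, i ≠ j → Disjoint (parts i) (parts j))
    (hpat : ∀ S T : Finset (Fin (2 * k)), S.card = k → T.card = k →
      (∀ i, (S ∩ parts i).card = (T ∩ parts i).card) → (S ∈ F ↔ T ∈ F))
    (hW : ∀ r : ℕ, k - gDef k ≤ r → r ≤ k → Wpow k r (hyperInd F) = 0) :
    (∀ S : Finset (Fin (2 * k)), S.card = k → S ∈ F) ∨
    (∀ S : Finset (Fin (2 * k)), S.card = k → S ∉ F) := by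
  classical
  have hP : Disjoint (parts 0) (parts 1) := hdisj 0 1 (by decide)
  have hcard0 : (parts 0).card = k := hcard 0
  have hcard1 : (parts 1).card = k := hcard 1
  have hunion : parts 0 ∪ parts 1 = (Finset.univ : Finset (Fin (2*k))) := by
    apply Finset.eq_univ_of_card
    rw [Finset.card_union_of_disjoint hP, hcard0, hcard1, Fintype.card_fin]
    omega
  have hsplitcard : ∀ S : Finset (Fin (2*k)), (S ∩ parts 0).card + (S ∩ parts 1).card = S.card := by
    intro S
    rw [← Finset.card_union_of_disjoint (Finset.disjoint_of_subset_left Finset.inter_subset_right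
      (Finset.disjoint_of_subset_right Finset.inter_subset_right hP)),
      ← Finset.inter_union_distrib_left, hunion, Finset.inter_univ]
  set α : ℕ → Bool := fun j =>
    decide (∃ S : Finset (Fin (2*k)), S.card = k ∧ (S ∩ parts 0).card = j ∧ S ∈ F) with hα
  have hkey : ∀ S : Finset (Fin (2*k)), S.card = k → (S ∈ F ↔ α (S ∩ parts 0).card = true) := by
    intro S hS
    constructor
    · intro hSF
      simp only [hα, decide_eq_true_eq]
      exact ⟨S, hS, rfl, hSF⟩
    · intro hα'
      simp only [hα, decide_eq_true_eq] at hα'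
      obtain ⟨T, hT, hTP, hTF⟩ := hα'
      refine (hpat S T hS hT ?_).2 hTF
      intro i
      have hfin : i = 0 ∨ i = 1 := by omega
      have h1 := hsplitcard S; have h2 := hsplitcard T
      rw [hS] at h1; rw [hT] at h2
      rcases hfin with rfl | rfl
      · omega
      · omega
  set Ar : ℕ → ℝ := fun j => if α j then 1 else 0 with hAr
  have hfA : ∀ R : Finset (Fin (2*k)), R.card = k → hyperInd F R = Ar (R ∩ parts 0).card := by
    intro R hR
    by_cases hRF : R ∈ F
    · simp only [hyperInd, if_pos hRF, hAr, (hkey R hR).1 hRF, if_true]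
    · have hfalse : α (R ∩ parts 0).card = false := by
        cases hc : α (R ∩ parts 0).card
        · rfl
        · exact absurd ((hkey R hR).2 hc) hRF
      simp only [hyperInd, if_neg hRF, hAr, hfalse, if_false]
      rw [if_neg]
      simp [hfalse]
  -- main step
  have hstep : ∀ r : ℕ, k - gDef k ≤ r → r ≤ k →
      (∀ j, j ≤ k - r → Dsum Ar r j = Dsum Ar r 0) → Dsum Ar r 0 = 0 := by
    intro r hgr hrk hconst
    set a : Fin r → Fin (2*k) := fun i => (parts 1).orderEmbOfFin hcard1 (Fin.castLE hrk i) with ha'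
    set b : Fin r → Fin (2*k) := fun i => (parts 0).orderEmbOfFin hcard0 (Fin.castLE hrk i) with hb'
    have ha : ∀ i, a i ∈ parts 1 := fun i => Finset.orderEmbOfFin_mem _ _ _
    have hb : ∀ i, b i ∈ parts 0 := fun i => Finset.orderEmbOfFin_mem _ _ _
    have hainj : Function.Injective a :=
      fun i j h => Fin.castLE_injective hrk (((parts 1).orderEmbOfFin hcard1).injective h)
    have hbinj : Function.Injective b :=
      fun i j h => Fin.castLE_injective hrk (((parts 0).orderEmbOfFin hcard0).injective h)
    have hab : ∀ i j, a i ≠ b j := fun i j h =>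
      Finset.disjoint_right.1 hP (h ▸ ha i) (hb j)
    have hsa : signedAvg k (hyperInd F) a b = 0 :=
      signedAvg_eq_zero _ a b (sumElim_injective a b hainj hbinj
        (fun i j h => Finset.disjoint_right.1 hP (h ▸ ha i) (hb j))) (hW r hgr hrk)
    have hAimg : (Finset.image a Finset.univ).card = r := by
      rw [Finset.card_image_of_injective _ hainj, Finset.card_univ, Fintype.card_fin]
    have haimgsub : Finset.image a Finset.univ ⊆ parts 1 := by
      intro x hx; obtain ⟨i, _, rfl⟩ := Finset.mem_image.1 hx; exact ha i
    have hbimgsub : Finset.image b Finset.univ ⊆ parts 0 := by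
      intro x hx; obtain ⟨i, _, rfl⟩ := Finset.mem_image.1 hx; exact hb i
    -- nonemptiness of the R-filter
    have hR0 : (Finset.image b Finset.univ ∪ (parts 1 \ Finset.image a Finset.univ)) ∈
        (Finset.univ.powersetCard k).filter
          (fun R : Finset (Fin (2*k)) => ∀ i, (R ∩ {a i, b i}).card = 1) := by
      rw [Finset.mem_filter, Finset.mem_powersetCard_univ]
      constructor
      · rw [Finset.card_union_of_disjoint (Finset.disjoint_of_subset_left hbimgsub
          (Finset.disjoint_of_subset_right Finset.sdiff_subset hP)),
          Finset.card_image_of_injective _ hbinj, Finset.card_univ, Fintype.card_fin,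
          Finset.card_sdiff_of_subset haimgsub, hcard1, hAimg]
        omega
      · intro i
        rw [card_inter_pair _ (hab i i)]
        have hbi : b i ∈ Finset.image b Finset.univ ∪ (parts 1 \ Finset.image a Finset.univ) :=
          Finset.mem_union.2 (Or.inl (Finset.mem_image.2 ⟨i, Finset.mem_univ i, rfl⟩))
        have hai : a i ∉ Finset.image b Finset.univ ∪ (parts 1 \ Finset.image a Finset.univ) := by
          intro hc
          rcases Finset.mem_union.1 hc with h | h
          · exact Finset.disjoint_right.1 hP (ha i) (hbimgsub h)
          · exact (Finset.mem_sdiff.1 h).2 (Finset.mem_image.2 ⟨i, Finset.mem_univ i, rfl⟩)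
        rw [if_neg hai, if_pos hbi]
    have hΩpos : (0:ℝ) < ((((Finset.univ.powersetCard k).filter
        (fun R : Finset (Fin (2*k)) => ∀ i, (R ∩ {a i, b i}).card = 1)).card : ℝ)) := by
      exact_mod_cast Finset.card_pos.2 ⟨_, hR0⟩
    have hnum : ∑ R ∈ (Finset.univ.powersetCard k).filter
        (fun R : Finset (Fin (2*k)) => ∀ i, (R ∩ {a i, b i}).card = 1),
        (-1:ℝ)^(R ∩ Finset.image b Finset.univ).card * hyperInd F R = 0 := by
      have h2 := hsa
      unfold signedAvg at h2
      rcases div_eq_zero_iff.1 h2 with h | h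
      · exact h
      · exact absurd h (ne_of_gt hΩpos)
    have hcount := numerator_eq (by omega : r + (k - r) = k) (parts 0) (parts 1) hP hunion
      a b ha hb hainj hbinj (hyperInd F) Ar hfA
    rw [hcount] at hnum
    have hinner : ∀ C ∈ ((parts 0 \ Finset.image b Finset.univ) ∪
        (parts 1 \ Finset.image a Finset.univ)).powersetCard (k - r),
        ∑ s ∈ (Finset.univ : Finset (Fin r)).powerset,
          (-1:ℝ)^s.card * Ar (s.card + (C ∩ parts 0).card) = Dsum Ar r 0 := by
      intro C hC
      rw [sum_powerset_sign r (fun n => Ar (n + (C ∩ parts 0).card))]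
      have hCle : (C ∩ parts 0).card ≤ k - r := by
        have := (Finset.mem_powersetCard.1 hC).2
        calc (C ∩ parts 0).card ≤ C.card := Finset.card_le_card Finset.inter_subset_left
          _ = k - r := this
      exact hconst _ hCle
    rw [Finset.sum_congr rfl hinner, Finset.sum_const, nsmul_eq_mul] at hnum
    have hUne : (parts 1 \ Finset.image a Finset.univ) ∈
        ((parts 0 \ Finset.image b Finset.univ) ∪
          (parts 1 \ Finset.image a Finset.univ)).powersetCard (k - r) := by
      rw [Finset.mem_powersetCard]
      exact ⟨Finset.subset_union_right, by rw [Finset.card_sdiff_of_subset haimgsub, hcard1, hAimg]⟩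
    have hpos : (0:ℝ) < (((((parts 0 \ Finset.image b Finset.univ) ∪
        (parts 1 \ Finset.image a Finset.univ)).powersetCard (k - r)).card : ℝ)) := by
      exact_mod_cast Finset.card_pos.2 ⟨_, hUne⟩
    rcases mul_eq_zero.1 hnum with h | h
    · exact absurd h (ne_of_gt hpos)
    · exact h
  -- downward induction
  have hind : ∀ t : ℕ, t ≤ gDef k → t ≤ k → ∀ j ≤ t, Dsum Ar (k - t) j = 0 := by
    intro t
    induction t with
    | zero =>
      intro _ _ j hj
      have hj0 : j = 0 := Nat.le_zero.1 hj
      subst hj0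
      simp only [Nat.sub_zero]
      exact hstep k (by omega) le_rfl (fun j hj => by
        have hj0 : j = 0 := by omega
        subst hj0; rfl)
    | succ t IH =>
      intro htg htk j hj
      have hIH : ∀ j ≤ t, Dsum Ar (k - t) j = 0 := IH (by omega) (by omega)
      have hks : k - t = (k - (t+1)) + 1 := by omega
      have hdiff : ∀ j, Dsum Ar (k - (t+1)) j - Dsum Ar (k - (t+1)) (j+1) = Dsum Ar (k - t) j := by
        intro j
        rw [hks, pascalD]
      have hconst : ∀ j ≤ t + 1, Dsum Ar (k - (t+1)) j = Dsum Ar (k - (t+1)) 0 := by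
        intro j hj
        induction j with
        | zero => rfl
        | succ j IHj =>
          have h1 := hdiff j
          rw [hIH j (by omega)] at h1
          have h2 := IHj (by omega)
          linarith
      have h0 : Dsum Ar (k - (t+1)) 0 = 0 := by
        apply hstep _ (by omega) (by omega)
        intro j hj
        exact hconst j (by omega)
      rw [hconst j hj, h0]
  have heqZ : ∀ r ∈ Finset.Icc (k - gDef k) k,
      ∑ i ∈ Finset.range (r+1), (-1:ℤ)^i * (r.choose i) * (if α i then 1 else 0) = 0 := by
    intro r hr
    rw [Finset.mem_Icc] at hr
    have hD : Dsum Ar r 0 = 0 := by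
      have h1 : k - (k - r) = r := by omega
      have := hind (k - r) (by omega) (by omega) 0 (by omega)
      rwa [h1] at this
    have hcast : ((∑ i ∈ Finset.range (r+1), (-1:ℤ)^i * (r.choose i) *
        (if α i then 1 else 0) : ℤ) : ℝ) = Dsum Ar r 0 := by
      unfold Dsum
      push_cast [apply_ite (Int.cast : ℤ → ℝ)]
      refine Finset.sum_congr rfl fun i _ => ?_
      rw [Nat.add_zero]
    exact_mod_cast hcast.trans hD
  have hne : {g : ℕ | ∀ m : ℕ, 2 ≤ m → m ≤ k →
      ∀ α : ℕ → Bool,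
        (∀ r ∈ Finset.Icc (m - g) m,
          ∑ i ∈ Finset.range (r + 1),
            (-1 : ℤ) ^ i * (r.choose i) * (if α i then 1 else 0) = 0) →
        ∀ i ≤ m, α i = α 0}.Nonempty := ⟨k, g_k_mem k⟩
  have hmem := Nat.sInf_mem hne
  have hαconst : ∀ i ≤ k, α i = α 0 := hmem k hk le_rfl α heqZ
  have hle : ∀ S : Finset (Fin (2*k)), S.card = k → (S ∩ parts 0).card ≤ k := by
    intro S hS
    calc (S ∩ parts 0).card ≤ S.card := Finset.card_le_card Finset.inter_subset_left
      _ = k := hS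
  cases hα0 : α 0 with
  | true =>
    left
    intro S hS
    refine (hkey S hS).2 ?_
    rw [hαconst _ (hle S hS), hα0]
  | false =>
    right
    intro S hS hc
    have := (hkey S hS).1 hc
    rw [hαconst _ (hle S hS), hα0] at this
    exact Bool.noConfusion this
end
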